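/- arXiv:math/0007016 — 3 statements merged into one kernel-verified Lean document; each statement's English description precedes it below -/
import Mathlib

section
/- For a partition λ of n and for any 1 ≤ i < n, the number of standard Young tableaux of shape λ having a descent at position i (i.e., the entry i+1 lies in a strictly lower row than the entry i) is independent of i. -/
open Finset

/-- A standard Young tableau of shape `μ`: a bijective filling of the cells of `μ`
with the numbers `1, ..., μ.card`, strictly increasing along rows and columns. -/
structure SYT (μ : YoungDiagram) where
  entry : ℕ → ℕ → ℕ
  row_strict : ∀ ⦃i j1 j2 : ℕ⦄, j1 < j2 → (i, j2) ∈ μ → entry i j1 < entry i j2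
  col_strict : ∀ ⦃i1 i2 j : ℕ⦄, i1 < i2 → (i2, j) ∈ μ → entry i1 j < entry i2 j
  zeros : ∀ ⦃i j : ℕ⦄, (i, j) ∉ μ → entry i j = 0
  bijOn : Set.BijOn (fun c : ℕ × ℕ => entry c.1 c.2) (μ.cells : Set (ℕ × ℕ))
    (Set.Icc 1 μ.card)

/-- `T` has a descent at `i` iff the entry `i+1` lies in a strictly lower row than `i`. -/
def SYT.DescentAt {μ : YoungDiagram} (T : SYT μ) (i : ℕ) : Prop :=
  ∀ c d : ℕ × ℕ, c ∈ μ → d ∈ μ →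
    T.entry c.1 c.2 = i → T.entry d.1 d.2 = i + 1 → c.1 < d.1

namespace SYT

variable {μ : YoungDiagram}

theorem ext' {T U : SYT μ} (h : T.entry = U.entry) : T = U := by
  cases T; cases U; simp only at h; subst h; rfl

lemma memc {c : ℕ × ℕ} (h : c ∈ μ) : c ∈ (μ.cells : Set (ℕ × ℕ)) := by
  simpa [YoungDiagram.mem_cells] using h

lemma entry_mem_Icc (T : SYT μ) {c : ℕ × ℕ} (hc : c ∈ μ) :
    T.entry c.1 c.2 ∈ Set.Icc 1 μ.card := T.bijOn.mapsTo (memc hc)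

instance : Finite (SYT μ) := by
  classical
  haveI : Finite (Set.Icc 1 μ.card : Set ℕ) := (Set.finite_Icc _ _).to_subtype
  let f : SYT μ → (μ.cells → (Set.Icc 1 μ.card : Set ℕ)) := fun T c =>
    ⟨T.entry c.1.1 c.1.2, T.entry_mem_Icc ((YoungDiagram.mem_cells _).mp c.2)⟩
  have hf : Function.Injective f := by
    intro T U h
    apply ext'
    funext a b
    by_cases hm : (a, b) ∈ μ
    · have := congrFun h ⟨(a, b), (YoungDiagram.mem_cells _).mpr hm⟩
      simpa [f] using this
    · rw [T.zeros hm, U.zeros hm]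
  exact Finite.of_injective f hf

noncomputable def pos (T : SYT μ) (k : ℕ) : ℕ × ℕ :=
  if h : ∃ c : ℕ × ℕ, c ∈ μ ∧ T.entry c.1 c.2 = k then h.choose else (0, 0)

lemma pos_spec (T : SYT μ) {k : ℕ} (h1 : 1 ≤ k) (h2 : k ≤ μ.card) :
    T.pos k ∈ μ ∧ T.entry (T.pos k).1 (T.pos k).2 = k := by
  have hex : ∃ c : ℕ × ℕ, c ∈ μ ∧ T.entry c.1 c.2 = k := by
    obtain ⟨c, hc, he⟩ := T.bijOn.surjOn (show k ∈ Set.Icc 1 μ.card from ⟨h1, h2⟩)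
    exact ⟨c, by simpa [YoungDiagram.mem_cells] using hc, he⟩
  rw [pos, dif_pos hex]
  exact hex.choose_spec

lemma pos_mem (T : SYT μ) {k : ℕ} (h1 : 1 ≤ k) (h2 : k ≤ μ.card) : T.pos k ∈ μ :=
  (T.pos_spec h1 h2).1

lemma entry_pos (T : SYT μ) {k : ℕ} (h1 : 1 ≤ k) (h2 : k ≤ μ.card) :
    T.entry (T.pos k).1 (T.pos k).2 = k := (T.pos_spec h1 h2).2

lemma pos_eq (T : SYT μ) {c : ℕ × ℕ} {k : ℕ} (hc : c ∈ μ) (he : T.entry c.1 c.2 = k) :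
    T.pos k = c := by
  have hk := T.entry_mem_Icc hc
  rw [he] at hk
  have h := T.pos_spec hk.1 hk.2
  exact T.bijOn.injOn (memc h.1) (memc hc) (by simp only [h.2, he])

/-- strictly increasing along a row -/
lemma lt_row (T : SYT μ) {x y : ℕ × ℕ} (hy : y ∈ μ) (hr : x.1 = y.1) (hc : x.2 < y.2) :
    T.entry x.1 x.2 < T.entry y.1 y.2 := by
  obtain ⟨a, b⟩ := x
  obtain ⟨a', b'⟩ := y
  simp only at hr hc
  subst hr
  exact T.row_strict hc hy

lemma lt_col (T : SYT μ) {x y : ℕ × ℕ} (hy : y ∈ μ) (hcl : x.2 = y.2) (hr : x.1 < y.1) :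
    T.entry x.1 x.2 < T.entry y.1 y.2 := by
  obtain ⟨a, b⟩ := x
  obtain ⟨a', b'⟩ := y
  simp only at hcl hr
  subst hcl
  exact T.col_strict hr hy

/-- if entries increase and columns agree then rows increase -/
lemma col_order (T : SYT μ) {x y : ℕ × ℕ} (hx : x ∈ μ) (hy : y ∈ μ)
    (he : T.entry x.1 x.2 < T.entry y.1 y.2) (hcl : x.2 = y.2) : x.1 < y.1 := by
  rcases lt_trichotomy x.1 y.1 with h | h | h
  · exact h
  · exfalso; have : x = y := Prod.ext h hcl; subst this; omega
  · exfalso; have := T.lt_col hx hcl.symm h; omega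

lemma row_order (T : SYT μ) {x y : ℕ × ℕ} (hx : x ∈ μ) (hy : y ∈ μ)
    (he : T.entry x.1 x.2 < T.entry y.1 y.2) (hr : x.1 = y.1) : x.2 < y.2 := by
  rcases lt_trichotomy x.2 y.2 with h | h | h
  · exact h
  · exfalso; have : x = y := Prod.ext hr h; subst this; omega
  · exfalso; have := T.lt_row hx hr.symm h; omega

/-- consecutive entries in the same row are adjacent -/
lemma row_adj (T : SYT μ) {x y : ℕ × ℕ} (hx : x ∈ μ) (hy : y ∈ μ) {k : ℕ}
    (hex : T.entry x.1 x.2 = k) (hey : T.entry y.1 y.2 = k + 1) (hr : x.1 = y.1) :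
    y = (x.1, x.2 + 1) := by
  have hlt : x.2 < y.2 := T.row_order hx hy (by omega) hr
  rcases eq_or_lt_of_le (show x.2 + 1 ≤ y.2 from hlt) with h | h
  · exact Prod.ext hr.symm h.symm
  · exfalso
    have hz : (x.1, x.2 + 1) ∈ μ := μ.up_left_mem (i2 := y.1) (j2 := y.2) (le_of_eq hr) (by omega) (by simpa using hy)
    have h1 : T.entry x.1 x.2 < T.entry x.1 (x.2 + 1) :=
      T.lt_row (x := x) (y := (x.1, x.2+1)) hz rfl (by simp)
    have h2 : T.entry x.1 (x.2+1) < T.entry y.1 y.2 :=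
      T.lt_row (x := (x.1, x.2+1)) hy hr h
    omega

lemma col_adj (T : SYT μ) {x y : ℕ × ℕ} (hx : x ∈ μ) (hy : y ∈ μ) {k : ℕ}
    (hex : T.entry x.1 x.2 = k) (hey : T.entry y.1 y.2 = k + 1) (hcl : x.2 = y.2) :
    y = (x.1 + 1, x.2) := by
  have hlt : x.1 < y.1 := T.col_order hx hy (by omega) hcl
  rcases eq_or_lt_of_le (show x.1 + 1 ≤ y.1 from hlt) with h | h
  · exact Prod.ext h.symm hcl.symm
  · exfalso
    have hz : (x.1 + 1, x.2) ∈ μ := μ.up_left_mem (i2 := y.1) (j2 := y.2) (by omega) (le_of_eq hcl) (by simpa using hy)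
    have h1 : T.entry x.1 x.2 < T.entry (x.1+1) x.2 :=
      T.lt_col (x := x) (y := (x.1+1, x.2)) hz rfl (by simp)
    have h2 : T.entry (x.1+1) x.2 < T.entry y.1 y.2 :=
      T.lt_col (x := (x.1+1, x.2)) hy hcl h
    omega

/-- entries k and k+2 in the same row: either adjacent, or the cell of k+1 sits in between -/
lemma row_skip (T : SYT μ) {x y m : ℕ × ℕ} (hx : x ∈ μ) (hy : y ∈ μ) (hm : m ∈ μ) {k : ℕ}
    (hex : T.entry x.1 x.2 = k) (hey : T.entry y.1 y.2 = k + 2)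
    (hem : T.entry m.1 m.2 = k + 1) (hr : x.1 = y.1) :
    y = (x.1, x.2 + 1) ∨ (m.1 = x.1 ∧ y = (m.1, m.2 + 1)) := by
  have hlt : x.2 < y.2 := T.row_order hx hy (by omega) hr
  rcases eq_or_lt_of_le (show x.2 + 1 ≤ y.2 from hlt) with h | h
  · exact Or.inl (Prod.ext hr.symm h.symm)
  · right
    have hz : (x.1, y.2 - 1) ∈ μ := μ.up_left_mem (i2 := y.1) (j2 := y.2) (le_of_eq hr) (by omega) (by simpa using hy)
    have h1 : T.entry x.1 x.2 < T.entry x.1 (y.2 - 1) :=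
      T.lt_row (x := x) (y := (x.1, y.2-1)) hz rfl (by simp; omega)
    have h2 : T.entry x.1 (y.2-1) < T.entry y.1 y.2 :=
      T.lt_row (x := (x.1, y.2-1)) hy hr (by omega)
    have hez : T.entry x.1 (y.2-1) = k + 1 := by omega
    have : T.pos (k+1) = (x.1, y.2-1) := T.pos_eq hz hez
    have hmz : m = (x.1, y.2 - 1) := by rw [← this, T.pos_eq hm hem]
    constructor
    · rw [hmz]
    · rw [hmz]; exact Prod.ext hr.symm (by simp; omega)

lemma col_skip (T : SYT μ) {x y m : ℕ × ℕ} (hx : x ∈ μ) (hy : y ∈ μ) (hm : m ∈ μ) {k : ℕ}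
    (hex : T.entry x.1 x.2 = k) (hey : T.entry y.1 y.2 = k + 2)
    (hem : T.entry m.1 m.2 = k + 1) (hcl : x.2 = y.2) :
    y = (x.1 + 1, x.2) ∨ (m.2 = x.2 ∧ y = (m.1 + 1, m.2)) := by
  have hlt : x.1 < y.1 := T.col_order hx hy (by omega) hcl
  rcases eq_or_lt_of_le (show x.1 + 1 ≤ y.1 from hlt) with h | h
  · exact Or.inl (Prod.ext h.symm hcl.symm)
  · right
    have hz : (y.1 - 1, x.2) ∈ μ := μ.up_left_mem (i2 := y.1) (j2 := y.2) (by omega) (le_of_eq hcl) (by simpa using hy)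
    have h1 : T.entry x.1 x.2 < T.entry (y.1-1) x.2 :=
      T.lt_col (x := x) (y := (y.1-1, x.2)) hz rfl (by simp; omega)
    have h2 : T.entry (y.1-1) x.2 < T.entry y.1 y.2 :=
      T.lt_col (x := (y.1-1, x.2)) hy hcl (by omega)
    have hez : T.entry (y.1-1) x.2 = k + 1 := by omega
    have : T.pos (k+1) = (y.1-1, x.2) := T.pos_eq hz hez
    have hmz : m = (y.1 - 1, x.2) := by rw [← this, T.pos_eq hm hem]
    constructor
    · rw [hmz]
    · rw [hmz]; exact Prod.ext (by simp; omega) hcl.symm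

section Perm

lemma descent_iff (T : SYT μ) {k : ℕ} (h1 : 1 ≤ k) (h2 : k + 1 ≤ μ.card) :
    T.DescentAt k ↔ (T.pos k).1 < (T.pos (k+1)).1 := by
  constructor
  · intro hD
    exact hD _ _ (T.pos_mem h1 (by omega)) (T.pos_mem (by omega) h2)
      (T.entry_pos h1 (by omega)) (T.entry_pos (by omega) h2)
  · intro h c d hc hd hec hed
    rw [← T.pos_eq hc hec, ← T.pos_eq hd hed]
    exact h

variable {i : ℕ} {π : Equiv.Perm ℕ}

lemma symm_fix (hfix : ∀ v, v < i ∨ i + 2 < v → π v = v) :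
    ∀ v, v < i ∨ i + 2 < v → π.symm v = v := by
  intro v hv
  conv_lhs => rw [← hfix v hv]
  exact π.symm_apply_apply v

lemma symm_band (hfix : ∀ v, v < i ∨ i + 2 < v → π v = v)
    (hband : ∀ v, i ≤ v → v ≤ i + 2 → i ≤ π v ∧ π v ≤ i + 2) :
    ∀ v, i ≤ v → v ≤ i + 2 → i ≤ π.symm v ∧ π.symm v ≤ i + 2 := by
  intro v h1 h2
  by_contra hcon
  have hout : π.symm v < i ∨ i + 2 < π.symm v := by omega
  have := hfix _ hout
  rw [π.apply_symm_apply] at this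
  omega

lemma perm_lt (hfix : ∀ v, v < i ∨ i + 2 < v → π v = v)
    (hband : ∀ v, i ≤ v → v ≤ i + 2 → i ≤ π v ∧ π v ≤ i + 2)
    {u v : ℕ} (huv : u < v) (hb : i ≤ u → v ≤ i + 2 → π u < π v) : π u < π v := by
  by_cases h1 : i ≤ u
  · by_cases h2 : v ≤ i + 2
    · exact hb h1 h2
    · have hv : π v = v := hfix v (by omega)
      by_cases h3 : u ≤ i + 2
      · have := hband u h1 h3; omega
      · have := hfix u (by omega); omega
  · have hu : π u = u := hfix u (by omega)
    by_cases h2 : i ≤ v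
    · by_cases h3 : v ≤ i + 2
      · have := hband v h2 h3; omega
      · have := hfix v (by omega); omega
    · have := hfix v (by omega); omega

/-- master construction: permute the values i, i+1, i+2 of an SYT -/
lemma exists_permuted (T : SYT μ) (i : ℕ) (h1 : 1 ≤ i) (h2 : i + 2 ≤ μ.card)
    (π : Equiv.Perm ℕ)
    (hfix : ∀ v, v < i ∨ i + 2 < v → π v = v)
    (hband : ∀ v, i ≤ v → v ≤ i + 2 → i ≤ π v ∧ π v ≤ i + 2)
    (hpq : π (i+1) < π i →
      (T.pos i).1 ≠ (T.pos (i+1)).1 ∧ (T.pos i).2 ≠ (T.pos (i+1)).2)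
    (hpr : π (i+2) < π i →
      (T.pos i).1 ≠ (T.pos (i+2)).1 ∧ (T.pos i).2 ≠ (T.pos (i+2)).2)
    (hqr : π (i+2) < π (i+1) →
      (T.pos (i+1)).1 ≠ (T.pos (i+2)).1 ∧ (T.pos (i+1)).2 ≠ (T.pos (i+2)).2) :
    ∃ U : SYT μ, U.entry = fun a b => π (T.entry a b) := by
  -- key monotonicity
  have key : ∀ x y : ℕ × ℕ, x ∈ μ → y ∈ μ → (x.1 = y.1 ∨ x.2 = y.2) →
      T.entry x.1 x.2 < T.entry y.1 y.2 →
      π (T.entry x.1 x.2) < π (T.entry y.1 y.2) := by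
    intro x y hx hy hcomp he
    apply perm_lt hfix hband he
    intro hu hv
    set u := T.entry x.1 x.2 with hu'
    set v := T.entry y.1 y.2 with hv'
    have hxu : T.pos u = x := T.pos_eq hx rfl
    have hyv : T.pos v = y := T.pos_eq hy rfl
    by_contra hcon
    have hne : π u ≠ π v := fun hh => by
      have : u = v := π.injective hh
      omega
    have hlt : π v < π u := by omega
    -- identify the pair
    have hcomp' : ¬((T.pos u).1 ≠ (T.pos v).1 ∧ (T.pos u).2 ≠ (T.pos v).2) := by
      rw [hxu, hyv]
      rcases hcomp with h | h
      · intro hc; exact hc.1 h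
      · intro hc; exact hc.2 h
    have hcases : (u = i ∧ v = i+1) ∨ (u = i ∧ v = i+2) ∨ (u = i+1 ∧ v = i+2) := by omega
    rcases hcases with ⟨he1, he2⟩ | ⟨he1, he2⟩ | ⟨he1, he2⟩ <;>
      rw [he1, he2] at hlt hcomp'
    · exact hcomp' (hpq hlt)
    · exact hcomp' (hpr hlt)
    · exact hcomp' (hqr hlt)
  have hone : ∀ c : ℕ × ℕ, c ∈ μ → 1 ≤ π (T.entry c.1 c.2) := by
    intro c hc
    have hm := T.entry_mem_Icc hc
    rw [Set.mem_Icc] at hm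
    by_cases hb : i ≤ T.entry c.1 c.2 ∧ T.entry c.1 c.2 ≤ i + 2
    · have := hband _ hb.1 hb.2; omega
    · have := hfix (T.entry c.1 c.2) (by omega); omega
  have hzero : π 0 = 0 := hfix 0 (by omega)
  refine ⟨⟨fun a b => π (T.entry a b), ?_, ?_, ?_, ?_⟩, rfl⟩
  · -- row_strict
    intro a j1 j2 hj hm2
    by_cases hm1 : (a, j1) ∈ μ
    · exact key (a, j1) (a, j2) hm1 hm2 (Or.inl rfl) (T.row_strict hj hm2)
    · show π (T.entry a j1) < π (T.entry a j2)
      rw [T.zeros hm1, hzero]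
      exact hone (a, j2) hm2
  · -- col_strict
    intro i1 i2 j hi hm2
    by_cases hm1 : (i1, j) ∈ μ
    · exact key (i1, j) (i2, j) hm1 hm2 (Or.inr rfl) (T.col_strict hi hm2)
    · show π (T.entry i1 j) < π (T.entry i2 j)
      rw [T.zeros hm1, hzero]
      exact hone (i2, j) hm2
  · -- zeros
    intro a b hm
    show π (T.entry a b) = 0
    rw [T.zeros hm, hzero]
  · -- bijOn
    have hπ : Set.BijOn π (Set.Icc 1 μ.card) (Set.Icc 1 μ.card) := by
      refine ⟨?_, π.injective.injOn, ?_⟩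
      · intro v hv
        by_cases hb : i ≤ v ∧ v ≤ i + 2
        · have := hband v hb.1 hb.2
          exact ⟨by omega, by omega⟩
        · rw [hfix v (by simp at hv; omega)]; exact hv
      · intro v hv
        refine ⟨π.symm v, ?_, π.apply_symm_apply v⟩
        by_cases hb : i ≤ v ∧ v ≤ i + 2
        · have := symm_band hfix hband v hb.1 hb.2
          exact ⟨by omega, by omega⟩
        · rw [symm_fix hfix v (by simp at hv; omega)]; exact hv
    exact hπ.comp T.bijOn

end Perm

section Swaps

lemma sw01_0 (i : ℕ) : Equiv.swap i (i+1) i = i + 1 := Equiv.swap_apply_left _ _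
lemma sw01_1 (i : ℕ) : Equiv.swap i (i+1) (i+1) = i := Equiv.swap_apply_right _ _
lemma sw01_2 (i : ℕ) : Equiv.swap i (i+1) (i+2) = i + 2 :=
  Equiv.swap_apply_of_ne_of_ne (by omega) (by omega)
lemma sw12_0 (i : ℕ) : Equiv.swap (i+1) (i+2) i = i :=
  Equiv.swap_apply_of_ne_of_ne (by omega) (by omega)
lemma sw12_1 (i : ℕ) : Equiv.swap (i+1) (i+2) (i+1) = i + 2 := Equiv.swap_apply_left _ _
lemma sw12_2 (i : ℕ) : Equiv.swap (i+1) (i+2) (i+2) = i + 1 := Equiv.swap_apply_right _ _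

lemma cyc_0 (i : ℕ) : (Equiv.swap i (i+1) * Equiv.swap (i+1) (i+2)) i = i + 1 := by
  rw [Equiv.Perm.mul_apply, sw12_0, sw01_0]
lemma cyc_1 (i : ℕ) : (Equiv.swap i (i+1) * Equiv.swap (i+1) (i+2)) (i+1) = i + 2 := by
  rw [Equiv.Perm.mul_apply, sw12_1, sw01_2]
lemma cyc_2 (i : ℕ) : (Equiv.swap i (i+1) * Equiv.swap (i+1) (i+2)) (i+2) = i := by
  rw [Equiv.Perm.mul_apply, sw12_2, sw01_1]

lemma cyc'_0 (i : ℕ) : (Equiv.swap (i+1) (i+2) * Equiv.swap i (i+1)) i = i + 2 := by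
  rw [Equiv.Perm.mul_apply, sw01_0, sw12_1]
lemma cyc'_1 (i : ℕ) : (Equiv.swap (i+1) (i+2) * Equiv.swap i (i+1)) (i+1) = i := by
  rw [Equiv.Perm.mul_apply, sw01_1, sw12_0]
lemma cyc'_2 (i : ℕ) : (Equiv.swap (i+1) (i+2) * Equiv.swap i (i+1)) (i+2) = i + 1 := by
  rw [Equiv.Perm.mul_apply, sw01_2, sw12_2]

lemma fix_sw01 (i : ℕ) : ∀ v, v < i ∨ i + 2 < v → Equiv.swap i (i+1) v = v :=
  fun _ hv => Equiv.swap_apply_of_ne_of_ne (by omega) (by omega)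
lemma fix_sw12 (i : ℕ) : ∀ v, v < i ∨ i + 2 < v → Equiv.swap (i+1) (i+2) v = v :=
  fun _ hv => Equiv.swap_apply_of_ne_of_ne (by omega) (by omega)
lemma fix_cyc (i : ℕ) :
    ∀ v, v < i ∨ i + 2 < v → (Equiv.swap i (i+1) * Equiv.swap (i+1) (i+2)) v = v :=
  fun v hv => by rw [Equiv.Perm.mul_apply, fix_sw12 i v hv, fix_sw01 i v hv]
lemma fix_cyc' (i : ℕ) :
    ∀ v, v < i ∨ i + 2 < v → (Equiv.swap (i+1) (i+2) * Equiv.swap i (i+1)) v = v :=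
  fun v hv => by rw [Equiv.Perm.mul_apply, fix_sw01 i v hv, fix_sw12 i v hv]
lemma fix_one (i : ℕ) : ∀ v, v < i ∨ i + 2 < v → (1 : Equiv.Perm ℕ) v = v :=
  fun v _ => rfl

lemma band_sw01 (i : ℕ) : ∀ v, i ≤ v → v ≤ i + 2 →
    i ≤ Equiv.swap i (i+1) v ∧ Equiv.swap i (i+1) v ≤ i + 2 := by
  intro v hv1 hv2
  have h : v = i ∨ v = i + 1 ∨ v = i + 2 := by omega
  rcases h with h | h | h <;> subst h
  · rw [sw01_0]; omega
  · rw [sw01_1]; omega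
  · rw [sw01_2]; omega

lemma band_sw12 (i : ℕ) : ∀ v, i ≤ v → v ≤ i + 2 →
    i ≤ Equiv.swap (i+1) (i+2) v ∧ Equiv.swap (i+1) (i+2) v ≤ i + 2 := by
  intro v hv1 hv2
  have h : v = i ∨ v = i + 1 ∨ v = i + 2 := by omega
  rcases h with h | h | h <;> subst h
  · rw [sw12_0]; omega
  · rw [sw12_1]; omega
  · rw [sw12_2]; omega

lemma band_cyc (i : ℕ) : ∀ v, i ≤ v → v ≤ i + 2 →
    i ≤ (Equiv.swap i (i+1) * Equiv.swap (i+1) (i+2)) v ∧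
      (Equiv.swap i (i+1) * Equiv.swap (i+1) (i+2)) v ≤ i + 2 := by
  intro v hv1 hv2
  have h : v = i ∨ v = i + 1 ∨ v = i + 2 := by omega
  rcases h with h | h | h <;> subst h
  · rw [cyc_0]; omega
  · rw [cyc_1]; omega
  · rw [cyc_2]; omega

lemma band_cyc' (i : ℕ) : ∀ v, i ≤ v → v ≤ i + 2 →
    i ≤ (Equiv.swap (i+1) (i+2) * Equiv.swap i (i+1)) v ∧
      (Equiv.swap (i+1) (i+2) * Equiv.swap i (i+1)) v ≤ i + 2 := by
  intro v hv1 hv2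
  have h : v = i ∨ v = i + 1 ∨ v = i + 2 := by omega
  rcases h with h | h | h <;> subst h
  · rw [cyc'_0]; omega
  · rw [cyc'_1]; omega
  · rw [cyc'_2]; omega

lemma band_one (i : ℕ) : ∀ v, i ≤ v → v ≤ i + 2 →
    i ≤ (1 : Equiv.Perm ℕ) v ∧ (1 : Equiv.Perm ℕ) v ≤ i + 2 := by
  intro v hv1 hv2
  simp only [Equiv.Perm.one_apply]
  omega

end Swaps

lemma pos_entry_eq {T U : SYT μ} {π : Equiv.Perm ℕ}
    (hUe : U.entry = fun a b => π (T.entry a b)) {k k' : ℕ}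
    (h1 : 1 ≤ k') (h2 : k' ≤ μ.card) (hπ : π k' = k) : U.pos k = T.pos k' := by
  apply U.pos_eq (T.pos_mem h1 h2)
  rw [hUe]
  simp only
  rw [T.entry_pos h1 h2, hπ]

noncomputable def fperm (T : SYT μ) (i : ℕ) : Equiv.Perm ℕ :=
  if T.pos (i+2) = ((T.pos (i+1)).1 + 1, (T.pos (i+1)).2) then Equiv.swap i (i+1)
  else if T.pos (i+2) = ((T.pos (i+1)).1, (T.pos (i+1)).2 + 1) then
    (if (T.pos i).1 = (T.pos (i+1)).1 then 1 else Equiv.swap i (i+1))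
  else if T.pos (i+2) = ((T.pos i).1 + 1, (T.pos i).2) ∨
      T.pos (i+2) = ((T.pos i).1, (T.pos i).2 + 1) then Equiv.swap (i+1) (i+2)
  else Equiv.swap i (i+1) * Equiv.swap (i+1) (i+2)

noncomputable def gperm (U : SYT μ) (i : ℕ) : Equiv.Perm ℕ :=
  if U.pos (i+1) = ((U.pos i).1 + 1, (U.pos i).2) then Equiv.swap (i+1) (i+2)
  else if U.pos (i+1) = ((U.pos i).1, (U.pos i).2 + 1) then
    (if (U.pos (i+2)).1 = (U.pos (i+1)).1 then 1 else Equiv.swap (i+1) (i+2))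
  else if U.pos (i+2) = ((U.pos i).1 + 1, (U.pos i).2) ∨
      U.pos (i+2) = ((U.pos i).1, (U.pos i).2 + 1) then Equiv.swap i (i+1)
  else Equiv.swap (i+1) (i+2) * Equiv.swap i (i+1)

lemma forward (T : SYT μ) (i : ℕ) (h1 : 1 ≤ i) (h2 : i + 2 ≤ μ.card)
    (hT : ¬ T.DescentAt i) :
    ∃ U : SYT μ, U.entry = (fun a b => fperm T i (T.entry a b)) ∧
      ¬ U.DescentAt (i+1) ∧ gperm U i = (fperm T i)⁻¹ := by
  have hpm : (T.pos i) ∈ μ := T.pos_mem h1 (by omega)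
  have hqm : (T.pos (i+1)) ∈ μ := T.pos_mem (by omega) (by omega)
  have hrm : (T.pos (i+2)) ∈ μ := T.pos_mem (by omega) h2
  have hep : T.entry (T.pos i).1 (T.pos i).2 = i := T.entry_pos h1 (by omega)
  have heq : T.entry (T.pos (i+1)).1 (T.pos (i+1)).2 = i + 1 := T.entry_pos (by omega) (by omega)
  have her : T.entry (T.pos (i+2)).1 (T.pos (i+2)).2 = i + 2 := T.entry_pos (by omega) h2
  have hba : (T.pos (i+1)).1 ≤ (T.pos i).1 := by
    by_contra hcon
    exact hT ((T.descent_iff h1 (by omega)).mpr (by omega))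
  have hpq_col : (T.pos i).2 ≠ (T.pos (i+1)).2 := by
    intro h
    have := T.col_order hpm hqm (by rw [hep, heq]; omega) h
    omega
  by_cases hC1 : (T.pos (i+2)) = ((T.pos (i+1)).1 + 1, (T.pos (i+1)).2)
  · -- Case C1 : the cell of i+1 is directly above the cell of i+2.  π = swap i (i+1)
    have hfp : fperm T i = Equiv.swap i (i+1) := by rw [fperm, if_pos hC1]
    have hpq_row : (T.pos i).1 ≠ (T.pos (i+1)).1 := by
      intro hab
      have hq' : (T.pos (i+1)) = ((T.pos i).1, (T.pos i).2 + 1) := T.row_adj hpm hqm hep heq hab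
      have hr' : (T.pos (i+2)) = ((T.pos i).1 + 1, (T.pos i).2 + 1) := by rw [hC1, hq']
      have hz : ((T.pos i).1 + 1, (T.pos i).2) ∈ μ :=
        μ.up_left_mem (i2 := (T.pos i).1 + 1) (j2 := (T.pos i).2 + 1) (by omega) (by omega)
          (by rw [← hr']; simpa using hrm)
      have hz1 : T.entry (T.pos i).1 (T.pos i).2 < T.entry ((T.pos i).1 + 1) (T.pos i).2 :=
        T.lt_col (x := (T.pos i)) (y := ((T.pos i).1 + 1, (T.pos i).2)) hz rfl (by simp)
      have hz2 : T.entry ((T.pos i).1 + 1) (T.pos i).2 < T.entry (T.pos (i+2)).1 (T.pos (i+2)).2 :=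
        T.lt_row (x := ((T.pos i).1 + 1, (T.pos i).2)) (y := (T.pos (i+2))) hrm (by rw [hr']) (by rw [hr']; simp)
      have hez : T.entry ((T.pos i).1 + 1) (T.pos i).2 = i + 1 := by omega
      have hzq : (T.pos (i+1)) = ((T.pos i).1 + 1, (T.pos i).2) := T.pos_eq hz hez
      have : (T.pos (i+1)).1 = (T.pos i).1 + 1 := by rw [hzq]
      omega
    obtain ⟨U, hUe⟩ := T.exists_permuted i h1 h2 (Equiv.swap i (i+1))
      (fix_sw01 i) (band_sw01 i)
      (fun _ => ⟨hpq_row, hpq_col⟩)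
      (fun h => absurd h (by rw [sw01_2, sw01_0]; omega))
      (fun h => absurd h (by rw [sw01_2, sw01_1]; omega))
    have hu : U.pos i = (T.pos (i+1)) := pos_entry_eq hUe (by omega) (by omega) (sw01_1 i)
    have hv : U.pos (i+1) = (T.pos i) := pos_entry_eq hUe h1 (by omega) (sw01_0 i)
    have hw : U.pos (i+2) = (T.pos (i+2)) := pos_entry_eq hUe (by omega) h2 (sw01_2 i)
    have hr1 : (T.pos (i+2)).1 = (T.pos (i+1)).1 + 1 := by rw [hC1]
    have hUd : ¬ U.DescentAt (i+1) := by
      rw [U.descent_iff (by omega) h2, hv, hw]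
      omega
    refine ⟨U, by rw [hfp]; exact hUe, hUd, ?_⟩
    have hg1 : ¬ ((T.pos i) = ((T.pos (i+1)).1 + 1, (T.pos (i+1)).2)) := fun h => hpq_col (by rw [h])
    have hg2 : ¬ ((T.pos i) = ((T.pos (i+1)).1, (T.pos (i+1)).2 + 1)) := fun h => hpq_row (by rw [h])
    simp only [gperm, hu, hv, hw]
    rw [if_neg hg1, if_neg hg2, if_pos (Or.inl hC1), hfp, Equiv.swap_inv]
  · by_cases hC2 : (T.pos (i+2)) = ((T.pos (i+1)).1, (T.pos (i+1)).2 + 1)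
    · have hr1 : (T.pos (i+2)).1 = (T.pos (i+1)).1 := by rw [hC2]
      by_cases hab : (T.pos i).1 = (T.pos (i+1)).1
      · -- Case C2 : three cells in a row.  π = 1
        have hfp : fperm T i = 1 := by rw [fperm, if_neg hC1, if_pos hC2, if_pos hab]
        obtain ⟨U, hUe⟩ := T.exists_permuted i h1 h2 (1 : Equiv.Perm ℕ)
          (fix_one i) (band_one i)
          (fun h => absurd h (by simp only [Equiv.Perm.one_apply]; omega))
          (fun h => absurd h (by simp only [Equiv.Perm.one_apply]; omega))
          (fun h => absurd h (by simp only [Equiv.Perm.one_apply]; omega))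
        have hu : U.pos i = (T.pos i) := pos_entry_eq hUe h1 (by omega) (Equiv.Perm.one_apply i)
        have hv : U.pos (i+1) = (T.pos (i+1)) := pos_entry_eq hUe (by omega) (by omega) (Equiv.Perm.one_apply _)
        have hw : U.pos (i+2) = (T.pos (i+2)) := pos_entry_eq hUe (by omega) h2 (Equiv.Perm.one_apply _)
        have hUd : ¬ U.DescentAt (i+1) := by
          rw [U.descent_iff (by omega) h2, hv, hw]
          omega
        refine ⟨U, by rw [hfp]; exact hUe, hUd, ?_⟩
        have hq' : (T.pos (i+1)) = ((T.pos i).1, (T.pos i).2 + 1) := T.row_adj hpm hqm hep heq hab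
        have hg1 : ¬ ((T.pos (i+1)) = ((T.pos i).1 + 1, (T.pos i).2)) := by
          intro h
          have h' := congrArg Prod.fst h
          simp only at h'
          omega
        simp only [gperm, hu, hv, hw]
        rw [if_neg hg1, if_pos hq', if_pos (by omega : (T.pos (i+2)).1 = (T.pos (i+1)).1), hfp, inv_one]
      · -- Case C3 : π = swap i (i+1)
        have hfp : fperm T i = Equiv.swap i (i+1) := by
          rw [fperm, if_neg hC1, if_pos hC2, if_neg hab]
        obtain ⟨U, hUe⟩ := T.exists_permuted i h1 h2 (Equiv.swap i (i+1))
          (fix_sw01 i) (band_sw01 i)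
          (fun _ => ⟨hab, hpq_col⟩)
          (fun h => absurd h (by rw [sw01_2, sw01_0]; omega))
          (fun h => absurd h (by rw [sw01_2, sw01_1]; omega))
        have hu : U.pos i = (T.pos (i+1)) := pos_entry_eq hUe (by omega) (by omega) (sw01_1 i)
        have hv : U.pos (i+1) = (T.pos i) := pos_entry_eq hUe h1 (by omega) (sw01_0 i)
        have hw : U.pos (i+2) = (T.pos (i+2)) := pos_entry_eq hUe (by omega) h2 (sw01_2 i)
        have hUd : ¬ U.DescentAt (i+1) := by
          rw [U.descent_iff (by omega) h2, hv, hw]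
          omega
        refine ⟨U, by rw [hfp]; exact hUe, hUd, ?_⟩
        have hg1 : ¬ ((T.pos i) = ((T.pos (i+1)).1 + 1, (T.pos (i+1)).2)) := fun h => hpq_col (by rw [h])
        have hg2 : ¬ ((T.pos i) = ((T.pos (i+1)).1, (T.pos (i+1)).2 + 1)) := fun h => hab (by rw [h])
        simp only [gperm, hu, hv, hw]
        rw [if_neg hg1, if_neg hg2, if_pos (Or.inr hC2), hfp, Equiv.swap_inv]
    · have hqr_row : (T.pos (i+1)).1 ≠ (T.pos (i+2)).1 := fun h => hC2 (T.row_adj hqm hrm heq her h)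
      have hqr_col : (T.pos (i+1)).2 ≠ (T.pos (i+2)).2 := fun h => hC1 (T.col_adj hqm hrm heq her h)
      by_cases hC4 : (T.pos (i+2)) = ((T.pos i).1 + 1, (T.pos i).2) ∨ (T.pos (i+2)) = ((T.pos i).1, (T.pos i).2 + 1)
      · -- Case C4 : π = swap (i+1) (i+2)
        have hfp : fperm T i = Equiv.swap (i+1) (i+2) := by
          rw [fperm, if_neg hC1, if_neg hC2, if_pos hC4]
        obtain ⟨U, hUe⟩ := T.exists_permuted i h1 h2 (Equiv.swap (i+1) (i+2))
          (fix_sw12 i) (band_sw12 i)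
          (fun h => absurd h (by rw [sw12_1, sw12_0]; omega))
          (fun h => absurd h (by rw [sw12_2, sw12_0]; omega))
          (fun _ => ⟨hqr_row, hqr_col⟩)
        have hu : U.pos i = (T.pos i) := pos_entry_eq hUe h1 (by omega) (sw12_0 i)
        have hv : U.pos (i+1) = (T.pos (i+2)) := pos_entry_eq hUe (by omega) h2 (sw12_2 i)
        have hw : U.pos (i+2) = (T.pos (i+1)) := pos_entry_eq hUe (by omega) (by omega) (sw12_1 i)
        have hr1 : (T.pos (i+2)).1 = (T.pos i).1 + 1 ∨ (T.pos (i+2)).1 = (T.pos i).1 := by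
          rcases hC4 with h | h
          · left; rw [h]
          · right; rw [h]
        have hUd : ¬ U.DescentAt (i+1) := by
          rw [U.descent_iff (by omega) h2, hv, hw]
          omega
        refine ⟨U, by rw [hfp]; exact hUe, hUd, ?_⟩
        rcases hC4 with h4 | h4
        · simp only [gperm, hu, hv, hw]
          rw [if_pos h4, hfp, Equiv.swap_inv]
        · have hg1 : ¬ ((T.pos (i+2)) = ((T.pos i).1 + 1, (T.pos i).2)) := by
            intro h
            have h' := congrArg Prod.fst h
            have h'' := congrArg Prod.fst h4
            simp only at h' h''
            omega
          have hg2i : ¬ ((T.pos (i+1)).1 = (T.pos (i+2)).1) := fun h => hqr_row h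
          simp only [gperm, hu, hv, hw]
          rw [if_neg hg1, if_pos h4, if_neg hg2i, hfp, Equiv.swap_inv]
      · -- Case C5 : π = cycle
        have hfp : fperm T i = Equiv.swap i (i+1) * Equiv.swap (i+1) (i+2) := by
          rw [fperm, if_neg hC1, if_neg hC2, if_neg hC4]
        rw [not_or] at hC4
        obtain ⟨hC4a, hC4b⟩ := hC4
        have hpr_row : (T.pos i).1 ≠ (T.pos (i+2)).1 := by
          intro h
          rcases T.row_skip hpm hrm hqm hep her heq h with hh | ⟨hh1, hh2⟩
          · exact hC4b hh
          · exact hC2 hh2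
        have hpr_col : (T.pos i).2 ≠ (T.pos (i+2)).2 := by
          intro h
          rcases T.col_skip hpm hrm hqm hep her heq h with hh | ⟨hh1, hh2⟩
          · exact hC4a hh
          · exact hC1 hh2
        obtain ⟨U, hUe⟩ := T.exists_permuted i h1 h2
          (Equiv.swap i (i+1) * Equiv.swap (i+1) (i+2))
          (fix_cyc i) (band_cyc i)
          (fun h => absurd h (by rw [cyc_1, cyc_0]; omega))
          (fun _ => ⟨hpr_row, hpr_col⟩)
          (fun _ => ⟨hqr_row, hqr_col⟩)
        have hu : U.pos i = (T.pos (i+2)) := pos_entry_eq hUe (by omega) h2 (cyc_2 i)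
        have hv : U.pos (i+1) = (T.pos i) := pos_entry_eq hUe h1 (by omega) (cyc_0 i)
        have hw : U.pos (i+2) = (T.pos (i+1)) := pos_entry_eq hUe (by omega) (by omega) (cyc_1 i)
        have hUd : ¬ U.DescentAt (i+1) := by
          rw [U.descent_iff (by omega) h2, hv, hw]
          omega
        refine ⟨U, by rw [hfp]; exact hUe, hUd, ?_⟩
        have hg1 : ¬ ((T.pos i) = ((T.pos (i+2)).1 + 1, (T.pos (i+2)).2)) := fun h => hpr_col (by rw [h])
        have hg2 : ¬ ((T.pos i) = ((T.pos (i+2)).1, (T.pos (i+2)).2 + 1)) := fun h => hpr_row (by rw [h])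
        have hg3 : ¬ ((T.pos (i+1)) = ((T.pos (i+2)).1 + 1, (T.pos (i+2)).2) ∨ (T.pos (i+1)) = ((T.pos (i+2)).1, (T.pos (i+2)).2 + 1)) := by
          rintro (h | h)
          · exact hqr_col (by rw [h])
          · exact hqr_row (by rw [h])
        simp only [gperm, hu, hv, hw]
        rw [if_neg hg1, if_neg hg2, if_neg hg3, hfp, mul_inv_rev,
          Equiv.swap_inv, Equiv.swap_inv]

lemma backward (U : SYT μ) (i : ℕ) (h1 : 1 ≤ i) (h2 : i + 2 ≤ μ.card)
    (hU : ¬ U.DescentAt (i+1)) :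
    ∃ T : SYT μ, T.entry = (fun a b => gperm U i (U.entry a b)) ∧
      ¬ T.DescentAt i ∧ fperm T i = (gperm U i)⁻¹ := by
  have hum : (U.pos i) ∈ μ := U.pos_mem h1 (by omega)
  have hvm : (U.pos (i+1)) ∈ μ := U.pos_mem (by omega) (by omega)
  have hwm : (U.pos (i+2)) ∈ μ := U.pos_mem (by omega) h2
  have heu : U.entry (U.pos i).1 (U.pos i).2 = i := U.entry_pos h1 (by omega)
  have hev : U.entry (U.pos (i+1)).1 (U.pos (i+1)).2 = i + 1 := U.entry_pos (by omega) (by omega)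
  have hew : U.entry (U.pos (i+2)).1 (U.pos (i+2)).2 = i + 2 := U.entry_pos (by omega) h2
  have hcb : (U.pos (i+2)).1 ≤ (U.pos (i+1)).1 := by
    by_contra hcon
    exact hU ((U.descent_iff (by omega) h2).mpr
      (show (U.pos (i+1)).1 < (U.pos (i+2)).1 by omega))
  have hvw_col : (U.pos (i+1)).2 ≠ (U.pos (i+2)).2 := by
    intro h
    have := U.col_order hvm hwm (by rw [hev, hew]; omega) h
    omega
  by_cases hG1 : (U.pos (i+1)) = ((U.pos i).1 + 1, (U.pos i).2)
  · -- Case G1 : π = swap (i+1) (i+2)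
    have hgp : gperm U i = Equiv.swap (i+1) (i+2) := by rw [gperm, if_pos hG1]
    have hv1 : (U.pos (i+1)).1 = (U.pos i).1 + 1 := by rw [hG1]
    have hvw_row : (U.pos (i+1)).1 ≠ (U.pos (i+2)).1 := by
      intro h
      have hw' : (U.pos (i+2)) = ((U.pos (i+1)).1, (U.pos (i+1)).2 + 1) := U.row_adj hvm hwm hev hew h
      have hw'' : (U.pos (i+2)) = ((U.pos i).1 + 1, (U.pos i).2 + 1) := by rw [hw', hG1]
      have hz : ((U.pos i).1, (U.pos i).2 + 1) ∈ μ :=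
        μ.up_left_mem (i2 := (U.pos i).1 + 1) (j2 := (U.pos i).2 + 1) (by omega) (by omega)
          (by rw [← hw'']; simpa using hwm)
      have hz1 : U.entry (U.pos i).1 (U.pos i).2 < U.entry (U.pos i).1 ((U.pos i).2 + 1) :=
        U.lt_row (x := (U.pos i)) (y := ((U.pos i).1, (U.pos i).2 + 1)) hz rfl (by simp)
      have hz2 : U.entry (U.pos i).1 ((U.pos i).2 + 1) < U.entry (U.pos (i+2)).1 (U.pos (i+2)).2 :=
        U.lt_col (x := ((U.pos i).1, (U.pos i).2 + 1)) (y := (U.pos (i+2))) hwm (by rw [hw'']) (by rw [hw'']; simp)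
      have hez : U.entry (U.pos i).1 ((U.pos i).2 + 1) = i + 1 := by omega
      have hzv : (U.pos (i+1)) = ((U.pos i).1, (U.pos i).2 + 1) := U.pos_eq hz hez
      have : (U.pos (i+1)).1 = (U.pos i).1 := by rw [hzv]
      omega
    obtain ⟨T, hTe⟩ := U.exists_permuted i h1 h2 (Equiv.swap (i+1) (i+2))
      (fix_sw12 i) (band_sw12 i)
      (fun h => absurd h (by rw [sw12_1, sw12_0]; omega))
      (fun h => absurd h (by rw [sw12_2, sw12_0]; omega))
      (fun _ => ⟨hvw_row, hvw_col⟩)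
    have hp : T.pos i = (U.pos i) := pos_entry_eq hTe h1 (by omega) (sw12_0 i)
    have hq : T.pos (i+1) = (U.pos (i+2)) := pos_entry_eq hTe (by omega) h2 (sw12_2 i)
    have hr : T.pos (i+2) = (U.pos (i+1)) := pos_entry_eq hTe (by omega) (by omega) (sw12_1 i)
    have hTd : ¬ T.DescentAt i := by
      rw [T.descent_iff h1 (by omega), hp, hq]
      omega
    refine ⟨T, by rw [hgp]; exact hTe, hTd, ?_⟩
    have hf1 : ¬ ((U.pos (i+1)) = ((U.pos (i+2)).1 + 1, (U.pos (i+2)).2)) := fun h => hvw_col (by rw [h])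
    have hf2 : ¬ ((U.pos (i+1)) = ((U.pos (i+2)).1, (U.pos (i+2)).2 + 1)) := fun h => hvw_row (by rw [h])
    simp only [fperm, hp, hq, hr]
    rw [if_neg hf1, if_neg hf2, if_pos (Or.inl hG1), hgp, Equiv.swap_inv]
  · by_cases hG2 : (U.pos (i+1)) = ((U.pos i).1, (U.pos i).2 + 1)
    · have hv1 : (U.pos (i+1)).1 = (U.pos i).1 := by rw [hG2]
      by_cases hG2i : (U.pos (i+2)).1 = (U.pos (i+1)).1
      · -- Case G2 : π = 1
        have hgp : gperm U i = 1 := by rw [gperm, if_neg hG1, if_pos hG2, if_pos hG2i]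
        obtain ⟨T, hTe⟩ := U.exists_permuted i h1 h2 (1 : Equiv.Perm ℕ)
          (fix_one i) (band_one i)
          (fun h => absurd h (by simp only [Equiv.Perm.one_apply]; omega))
          (fun h => absurd h (by simp only [Equiv.Perm.one_apply]; omega))
          (fun h => absurd h (by simp only [Equiv.Perm.one_apply]; omega))
        have hp : T.pos i = (U.pos i) := pos_entry_eq hTe h1 (by omega) (Equiv.Perm.one_apply i)
        have hq : T.pos (i+1) = (U.pos (i+1)) := pos_entry_eq hTe (by omega) (by omega) (Equiv.Perm.one_apply _)
        have hr : T.pos (i+2) = (U.pos (i+2)) := pos_entry_eq hTe (by omega) h2 (Equiv.Perm.one_apply _)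
        have hTd : ¬ T.DescentAt i := by
          rw [T.descent_iff h1 (by omega), hp, hq]
          omega
        refine ⟨T, by rw [hgp]; exact hTe, hTd, ?_⟩
        have hw' : (U.pos (i+2)) = ((U.pos (i+1)).1, (U.pos (i+1)).2 + 1) := U.row_adj hvm hwm hev hew hG2i.symm
        have hf1 : ¬ ((U.pos (i+2)) = ((U.pos (i+1)).1 + 1, (U.pos (i+1)).2)) := by
          intro h
          have h' : (U.pos (i+2)).1 = (U.pos (i+1)).1 + 1 := by rw [h]
          omega
        simp only [fperm, hp, hq, hr]
        rw [if_neg hf1, if_pos hw', if_pos (by omega : (U.pos i).1 = (U.pos (i+1)).1), hgp, inv_one]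
      · -- Case G3 : π = swap (i+1) (i+2)
        have hgp : gperm U i = Equiv.swap (i+1) (i+2) := by
          rw [gperm, if_neg hG1, if_pos hG2, if_neg hG2i]
        have hvw_row : (U.pos (i+1)).1 ≠ (U.pos (i+2)).1 := fun h => hG2i h.symm
        obtain ⟨T, hTe⟩ := U.exists_permuted i h1 h2 (Equiv.swap (i+1) (i+2))
          (fix_sw12 i) (band_sw12 i)
          (fun h => absurd h (by rw [sw12_1, sw12_0]; omega))
          (fun h => absurd h (by rw [sw12_2, sw12_0]; omega))
          (fun _ => ⟨hvw_row, hvw_col⟩)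
        have hp : T.pos i = (U.pos i) := pos_entry_eq hTe h1 (by omega) (sw12_0 i)
        have hq : T.pos (i+1) = (U.pos (i+2)) := pos_entry_eq hTe (by omega) h2 (sw12_2 i)
        have hr : T.pos (i+2) = (U.pos (i+1)) := pos_entry_eq hTe (by omega) (by omega) (sw12_1 i)
        have hTd : ¬ T.DescentAt i := by
          rw [T.descent_iff h1 (by omega), hp, hq]
          omega
        refine ⟨T, by rw [hgp]; exact hTe, hTd, ?_⟩
        have hf1 : ¬ ((U.pos (i+1)) = ((U.pos (i+2)).1 + 1, (U.pos (i+2)).2)) := fun h => hvw_col (by rw [h])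
        have hf2 : ¬ ((U.pos (i+1)) = ((U.pos (i+2)).1, (U.pos (i+2)).2 + 1)) := fun h => hvw_row (by rw [h])
        simp only [fperm, hp, hq, hr]
        rw [if_neg hf1, if_neg hf2, if_pos (Or.inr hG2), hgp, Equiv.swap_inv]
    · have huv_row : (U.pos i).1 ≠ (U.pos (i+1)).1 := fun h => hG2 (U.row_adj hum hvm heu hev h)
      have huv_col : (U.pos i).2 ≠ (U.pos (i+1)).2 := fun h => hG1 (U.col_adj hum hvm heu hev h)
      by_cases hG4 : (U.pos (i+2)) = ((U.pos i).1 + 1, (U.pos i).2) ∨ (U.pos (i+2)) = ((U.pos i).1, (U.pos i).2 + 1)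
      · -- Case G4 : π = swap i (i+1)
        have hgp : gperm U i = Equiv.swap i (i+1) := by
          rw [gperm, if_neg hG1, if_neg hG2, if_pos hG4]
        obtain ⟨T, hTe⟩ := U.exists_permuted i h1 h2 (Equiv.swap i (i+1))
          (fix_sw01 i) (band_sw01 i)
          (fun _ => ⟨huv_row, huv_col⟩)
          (fun h => absurd h (by rw [sw01_2, sw01_0]; omega))
          (fun h => absurd h (by rw [sw01_2, sw01_1]; omega))
        have hp : T.pos i = (U.pos (i+1)) := pos_entry_eq hTe (by omega) (by omega) (sw01_1 i)
        have hq : T.pos (i+1) = (U.pos i) := pos_entry_eq hTe h1 (by omega) (sw01_0 i)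
        have hr : T.pos (i+2) = (U.pos (i+2)) := pos_entry_eq hTe (by omega) h2 (sw01_2 i)
        have hw1 : (U.pos (i+2)).1 = (U.pos i).1 + 1 ∨ (U.pos (i+2)).1 = (U.pos i).1 := by
          rcases hG4 with h | h
          · left; rw [h]
          · right; rw [h]
        have hTd : ¬ T.DescentAt i := by
          rw [T.descent_iff h1 (by omega), hp, hq]
          omega
        refine ⟨T, by rw [hgp]; exact hTe, hTd, ?_⟩
        rcases hG4 with h4 | h4
        · simp only [fperm, hp, hq, hr]
          rw [if_pos h4, hgp, Equiv.swap_inv]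
        · have hf1 : ¬ ((U.pos (i+2)) = ((U.pos i).1 + 1, (U.pos i).2)) := by
            intro h
            have h' : (U.pos (i+2)).1 = (U.pos i).1 + 1 := by rw [h]
            have h'' : (U.pos (i+2)).1 = (U.pos i).1 := by rw [h4]
            omega
          have hf2i : ¬ ((U.pos (i+1)).1 = (U.pos i).1) := fun h => huv_row h.symm
          simp only [fperm, hp, hq, hr]
          rw [if_neg hf1, if_pos h4, if_neg hf2i, hgp, Equiv.swap_inv]
      · -- Case G5 : π = inverse cycle
        have hgp : gperm U i = Equiv.swap (i+1) (i+2) * Equiv.swap i (i+1) := by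
          rw [gperm, if_neg hG1, if_neg hG2, if_neg hG4]
        rw [not_or] at hG4
        obtain ⟨hG4a, hG4b⟩ := hG4
        have huw_row : (U.pos i).1 ≠ (U.pos (i+2)).1 := by
          intro h
          rcases U.row_skip hum hwm hvm heu hew hev h with hh | ⟨hh1, hh2⟩
          · exact hG4b hh
          · exact huv_row hh1.symm
        have huw_col : (U.pos i).2 ≠ (U.pos (i+2)).2 := by
          intro h
          rcases U.col_skip hum hwm hvm heu hew hev h with hh | ⟨hh1, hh2⟩
          · exact hG4a hh
          · exact huv_col hh1.symm
        obtain ⟨T, hTe⟩ := U.exists_permuted i h1 h2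
          (Equiv.swap (i+1) (i+2) * Equiv.swap i (i+1))
          (fix_cyc' i) (band_cyc' i)
          (fun _ => ⟨huv_row, huv_col⟩)
          (fun _ => ⟨huw_row, huw_col⟩)
          (fun h => absurd h (by rw [cyc'_2, cyc'_1]; omega))
        have hp : T.pos i = (U.pos (i+1)) := pos_entry_eq hTe (by omega) (by omega) (cyc'_1 i)
        have hq : T.pos (i+1) = (U.pos (i+2)) := pos_entry_eq hTe (by omega) h2 (cyc'_2 i)
        have hr : T.pos (i+2) = (U.pos i) := pos_entry_eq hTe h1 (by omega) (cyc'_0 i)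
        have hTd : ¬ T.DescentAt i := by
          rw [T.descent_iff h1 (by omega), hp, hq]
          omega
        refine ⟨T, by rw [hgp]; exact hTe, hTd, ?_⟩
        have hf1 : ¬ ((U.pos i) = ((U.pos (i+2)).1 + 1, (U.pos (i+2)).2)) := fun h => huw_col (by rw [h])
        have hf2 : ¬ ((U.pos i) = ((U.pos (i+2)).1, (U.pos (i+2)).2 + 1)) := fun h => huw_row (by rw [h])
        have hf3 : ¬ ((U.pos i) = ((U.pos (i+1)).1 + 1, (U.pos (i+1)).2) ∨ (U.pos i) = ((U.pos (i+1)).1, (U.pos (i+1)).2 + 1)) := by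
          rintro (h | h)
          · exact huv_col (by rw [h])
          · exact huv_row (by rw [h])
        simp only [fperm, hp, hq, hr]
        rw [if_neg hf1, if_neg hf2, if_neg hf3, hgp, mul_inv_rev,
          Equiv.swap_inv, Equiv.swap_inv]

lemma step (i : ℕ) (h1 : 1 ≤ i) (h2 : i + 2 ≤ μ.card) :
    Nat.card {T : SYT μ // ¬ T.DescentAt i} =
      Nat.card {T : SYT μ // ¬ T.DescentAt (i+1)} := by
  apply Nat.card_congr
  refine
    { toFun := fun T => ⟨(forward T.1 i h1 h2 T.2).choose,
        (forward T.1 i h1 h2 T.2).choose_spec.2.1⟩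
      invFun := fun V => ⟨(backward V.1 i h1 h2 V.2).choose,
        (backward V.1 i h1 h2 V.2).choose_spec.2.1⟩
      left_inv := ?_
      right_inv := ?_ }
  · intro T
    apply Subtype.ext
    obtain ⟨hUe, hUd, hUg⟩ := (forward T.1 i h1 h2 T.2).choose_spec
    show (backward (forward T.1 i h1 h2 T.2).choose i h1 h2 hUd).choose = T.1
    obtain ⟨hTe, -, -⟩ := (backward (forward T.1 i h1 h2 T.2).choose i h1 h2 hUd).choose_spec
    apply ext'
    funext a b
    have h3 := congrFun (congrFun hTe a) b
    have h4 := congrFun (congrFun hUe a) b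
    rw [h3, h4, hUg]
    exact Equiv.symm_apply_apply _ _
  · intro V
    apply Subtype.ext
    obtain ⟨hTe, hTd, hTf⟩ := (backward V.1 i h1 h2 V.2).choose_spec
    show (forward (backward V.1 i h1 h2 V.2).choose i h1 h2 hTd).choose = V.1
    obtain ⟨hUe, -, -⟩ := (forward (backward V.1 i h1 h2 V.2).choose i h1 h2 hTd).choose_spec
    apply ext'
    funext a b
    have h3 := congrFun (congrFun hUe a) b
    have h4 := congrFun (congrFun hTe a) b
    rw [h3, h4, hTf]
    exact Equiv.symm_apply_apply _ _

end SYT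

/-- The number of standard Young tableaux of shape `μ` with a descent at `i`
(for `1 ≤ i < n`) is independent of `i`. -/
theorem descent_count_independent (n : ℕ) (μ : YoungDiagram) (hn : μ.card = n)
    (i i' : ℕ) (hi1 : 1 ≤ i) (hi2 : i < n) (hi'1 : 1 ≤ i') (hi'2 : i' < n) :
    Nat.card {T : SYT μ // T.DescentAt i} = Nat.card {T : SYT μ // T.DescentAt i'} := by
  subst hn
  classical
  have compl : ∀ j : ℕ, Nat.card {T : SYT μ // T.DescentAt j} +
      Nat.card {T : SYT μ // ¬ T.DescentAt j} = Nat.card (SYT μ) := by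
    intro j
    rw [← Nat.card_sum]
    exact Nat.card_congr (Equiv.sumCompl _)
  have key : ∀ j : ℕ, 1 ≤ j → j < μ.card →
      Nat.card {T : SYT μ // ¬ T.DescentAt j} =
        Nat.card {T : SYT μ // ¬ T.DescentAt 1} := by
    intro j
    induction j with
    | zero => omega
    | succ k ih =>
      intro hk1 hk2
      by_cases hk : k = 0
      · subst hk; rfl
      · have h1k : 1 ≤ k := by omega
        have hs := SYT.step (μ := μ) k h1k (by omega)
        rw [← hs]
        exact ih h1k (by omega)
  have e1 := compl i
  have e2 := compl i'
  have k1 := key i hi1 hi2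
  have k2 := key i' hi'1 hi'2
  omega
end

section
/- Let λ be a partition of n ≥ 2 with conjugate λ'. Then (1/2)·[1 + Σᵢ λ'ᵢ(λ'ᵢ−1)/(n(n−1)) − Σᵢ λᵢ(λᵢ−1)/(n(n−1))] = Σ_{i≥j} λ'ᵢ(λ'ⱼ−1)/(n(n−1)), where the right-hand sum is over all pairs of indices i ≥ j of parts of λ'. -/
open Finset

private lemma gauss_real (r : ℕ) : 2 * ∑ j ∈ Finset.range r, (j : ℝ) = r * ((r : ℝ) - 1) := by
  induction r with
  | zero => simp
  | succ m ih =>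
    rw [Finset.sum_range_succ]
    push_cast
    push_cast at ih
    linarith

private lemma pair_sum (f : ℕ → ℝ) (n : ℕ) :
    2 * ∑ i ∈ Finset.range n, ∑ j ∈ Finset.range (i + 1), f i * f j
      = (∑ i ∈ Finset.range n, f i) ^ 2 + ∑ i ∈ Finset.range n, f i ^ 2 := by
  induction n with
  | zero => simp
  | succ m ih =>
    rw [Finset.sum_range_succ (f := fun i => ∑ j ∈ Finset.range (i + 1), f i * f j),
      Finset.sum_range_succ (f := f), Finset.sum_range_succ (f := fun i => f i ^ 2),
      Finset.sum_range_succ (f := fun j => f m * f j), ← Finset.mul_sum]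
    ring_nf
    ring_nf at ih
    linarith

section aux
variable (μ : YoungDiagram) (n : ℕ)

private lemma rowLen_le (hn : μ.card = n) (i : ℕ) : μ.rowLen i ≤ n := by
  calc μ.rowLen i ≤ μ.rowLen 0 := μ.rowLen_anti 0 i (Nat.zero_le i)
  _ = (μ.row 0).card := μ.rowLen_eq_card
  _ ≤ μ.card := Finset.card_le_card (Finset.filter_subset _ _)
  _ = n := hn

private lemma colLen_le (hn : μ.card = n) (j : ℕ) : μ.colLen j ≤ n := by
  calc μ.colLen j ≤ μ.colLen 0 := μ.colLen_anti 0 j (Nat.zero_le j)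
  _ = (μ.col 0).card := μ.colLen_eq_card
  _ ≤ μ.card := Finset.card_le_card (Finset.filter_subset _ _)
  _ = n := hn

private lemma row_sum (hn : μ.card = n) (f : ℕ × ℕ → ℝ) :
    ∑ c ∈ μ.cells, f c
      = ∑ i ∈ Finset.range n, ∑ j ∈ Finset.range (μ.rowLen i), f (i, j) := by
  have hcells : μ.cells = (Finset.range n ×ˢ Finset.range n).filter (fun c => c ∈ μ) := by
    ext ⟨i, j⟩
    simp only [Finset.mem_filter, Finset.mem_product, Finset.mem_range, YoungDiagram.mem_cells]
    constructor
    · intro h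
      refine ⟨⟨?_, ?_⟩, h⟩
      · exact lt_of_lt_of_le (YoungDiagram.mem_iff_lt_colLen.mp h) (colLen_le μ n hn j)
      · exact lt_of_lt_of_le (YoungDiagram.mem_iff_lt_rowLen.mp h) (rowLen_le μ n hn i)
    · exact fun h => h.2
  rw [hcells, Finset.sum_filter, Finset.sum_product]
  refine Finset.sum_congr rfl fun i _ => ?_
  rw [← Finset.sum_filter]
  congr 1
  ext j
  simp only [Finset.mem_filter, Finset.mem_range, YoungDiagram.mem_cells,
    YoungDiagram.mem_iff_lt_rowLen]
  exact ⟨fun h => h.2, fun h => ⟨lt_of_lt_of_le h (rowLen_le μ n hn i), h⟩⟩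

private lemma card_transpose : μ.transpose.card = μ.card := by
  simp [YoungDiagram.transpose, YoungDiagram.card]

private lemma col_sum (hn : μ.card = n) (f : ℕ × ℕ → ℝ) :
    ∑ c ∈ μ.cells, f c
      = ∑ j ∈ Finset.range n, ∑ i ∈ Finset.range (μ.colLen j), f (i, j) := by
  have h1 : ∑ c ∈ μ.cells, f c = ∑ c ∈ μ.transpose.cells, f c.swap := by
    simp only [YoungDiagram.transpose, Equiv.finsetCongr_apply, Finset.sum_map,
      Equiv.coe_toEmbedding, Equiv.prodComm_apply, Prod.swap_swap]
  rw [h1, row_sum μ.transpose n (by rw [card_transpose]; exact hn) (fun c => f c.swap)]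
  simp [YoungDiagram.rowLen_transpose]

end aux

/-- `(1/2)[1 + Σ λ'ᵢ(λ'ᵢ−1)/(n(n−1)) − Σ λᵢ(λᵢ−1)/(n(n−1))] = Σ_{i≥j} λ'ᵢ(λ'ⱼ−1)/(n(n−1))`,
where `λᵢ = μ.rowLen i` and `λ'ᵢ = μ.colLen i` for the Young diagram `μ` of `λ`. -/
theorem c_conj_formula (μ : YoungDiagram) (n : ℕ) (hn : μ.card = n) (h2 : 2 ≤ n) :
    (1 / 2 : ℝ) *
        (1 + (∑ i ∈ Finset.range n, (μ.colLen i : ℝ) * ((μ.colLen i : ℝ) - 1)) /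
            (n * ((n : ℝ) - 1))
          - (∑ i ∈ Finset.range n, (μ.rowLen i : ℝ) * ((μ.rowLen i : ℝ) - 1)) /
            (n * ((n : ℝ) - 1)))
      = ∑ i ∈ Finset.range n, ∑ j ∈ Finset.range (i + 1),
          (μ.colLen i : ℝ) * ((μ.colLen j : ℝ) - 1) / (n * ((n : ℝ) - 1)) := by
  have hn2 : (2 : ℝ) ≤ (n : ℝ) := by exact_mod_cast h2
  have hD : (n : ℝ) * ((n : ℝ) - 1) ≠ 0 := by
    apply mul_ne_zero <;> nlinarith
  have hone : ∑ _c ∈ μ.cells, (1 : ℝ) = n := by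
    rw [Finset.sum_const]; rw [show #μ.cells = n from hn]; simp
  have hsr : ∑ i ∈ Finset.range n, (μ.rowLen i : ℝ) = n := by
    have h := (row_sum μ n hn fun _ => (1 : ℝ)).symm.trans hone
    simpa using h
  have hsc : ∑ i ∈ Finset.range n, (μ.colLen i : ℝ) = n := by
    have h := (col_sum μ n hn fun _ => (1 : ℝ)).symm.trans hone
    simpa using h
  have hg : ∑ i ∈ Finset.range n, (μ.rowLen i : ℝ) * ((μ.rowLen i : ℝ) - 1)
      = 2 * ∑ j ∈ Finset.range n, (j : ℝ) * (μ.colLen j : ℝ) := by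
    have h1 : ∑ i ∈ Finset.range n, (μ.rowLen i : ℝ) * ((μ.rowLen i : ℝ) - 1)
        = 2 * ∑ i ∈ Finset.range n, ∑ j ∈ Finset.range (μ.rowLen i), (j : ℝ) := by
      rw [Finset.mul_sum]
      exact Finset.sum_congr rfl fun i _ => (gauss_real _).symm
    have h2 := row_sum μ n hn (fun c => (c.2 : ℝ))
    have h3 := col_sum μ n hn (fun c => (c.2 : ℝ))
    rw [h1, ← h2, h3]
    simp [Finset.sum_const, Finset.card_range, nsmul_eq_mul, mul_comm]
  have hp := pair_sum (fun i => (μ.colLen i : ℝ)) n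
  rw [hsc] at hp
  have hS : ∑ i ∈ Finset.range n, ∑ j ∈ Finset.range (i + 1),
        (μ.colLen i : ℝ) * ((μ.colLen j : ℝ) - 1)
      = (∑ i ∈ Finset.range n, ∑ j ∈ Finset.range (i + 1),
          (μ.colLen i : ℝ) * (μ.colLen j : ℝ))
        - ((∑ i ∈ Finset.range n, (i : ℝ) * (μ.colLen i : ℝ)) + n) := by
    simp only [mul_sub, mul_one, Finset.sum_sub_distrib, Finset.sum_const, Finset.card_range,
      nsmul_eq_mul]
    congr 1
    push_cast
    simp only [add_mul, one_mul, Finset.sum_add_distrib]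
    rw [hsc]

  have hC : ∑ i ∈ Finset.range n, (μ.colLen i : ℝ) * ((μ.colLen i : ℝ) - 1)
      = (∑ i ∈ Finset.range n, (μ.colLen i : ℝ) ^ 2) - n := by
    simp only [mul_sub, mul_one, Finset.sum_sub_distrib, ← sq]
    rw [hsc]
  simp only [← Finset.sum_div]
  rw [hS, hg, hC,
    show ∑ i ∈ Finset.range n, ∑ j ∈ Finset.range (i + 1), (μ.colLen i : ℝ) * (μ.colLen j : ℝ)
      = ((n : ℝ) ^ 2 + ∑ i ∈ Finset.range n, (μ.colLen i : ℝ) ^ 2) / 2 from by linarith [hp]]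
  have hn1 : (n : ℝ) - 1 ≠ 0 := ne_of_gt (by linarith)
  field_simp
  ring
end

section
/- The number of standard Young tableaux of shape λ (a partition of n ≥ 2) with a descent at position 1 equals N · c_{λ'}, where N is the total number of standard Young tableaux of shape λ and c_{λ'} = Σ_{i≥j} λ'ᵢ(λ'ⱼ−1)/(n(n−1)). -/
open Finset

namespace SYTAux

variable {μ : YoungDiagram}

lemma SYT.ext' {T S : SYT μ} (h : T.entry = S.entry) : T = S := by
  cases T; cases S; cases h; rfl

lemma mem_coe_cells {c : ℕ × ℕ} (hc : c ∈ μ) : c ∈ (μ.cells : Set (ℕ × ℕ)) := by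
  simpa [YoungDiagram.mem_cells] using hc

lemma entry_mem (T : SYT μ) {c : ℕ × ℕ} (hc : c ∈ μ) :
    T.entry c.1 c.2 ∈ Set.Icc 1 μ.card := T.bijOn.mapsTo (mem_coe_cells hc)

/-- strict monotonicity along the componentwise order -/
lemma entry_lt (T : SYT μ) {p q : ℕ × ℕ} (hq : q ∈ μ) (h1 : p.1 ≤ q.1) (h2 : p.2 ≤ q.2)
    (hne : p ≠ q) : T.entry p.1 p.2 < T.entry q.1 q.2 := by
  rcases lt_or_eq_of_le h2 with h2' | h2'
  · have hmid : (p.1, q.2) ∈ μ := μ.up_left_mem h1 le_rfl hq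
    have l1 : T.entry p.1 p.2 < T.entry p.1 q.2 := T.row_strict h2' hmid
    rcases lt_or_eq_of_le h1 with h1' | h1'
    · exact l1.trans (T.col_strict h1' (by simpa using hq))
    · rw [h1'] at l1 ⊢; exact l1
  · rcases lt_or_eq_of_le h1 with h1' | h1'
    · rw [h2']; exact T.col_strict h1' (by simpa [h2'] using hq)
    · exact absurd (Prod.ext h1' h2') hne

noncomputable def pos (T : SYT μ) (k : ℕ) : ℕ × ℕ :=
  if h : ∃ c, c ∈ μ ∧ T.entry c.1 c.2 = k then h.choose else (0, 0)

lemma pos_spec (T : SYT μ) {k : ℕ} (hk : 1 ≤ k) (hk' : k ≤ μ.card) :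
    pos T k ∈ μ ∧ T.entry (pos T k).1 (pos T k).2 = k := by
  have hmem : k ∈ Set.Icc 1 μ.card := ⟨hk, hk'⟩
  obtain ⟨c, hc, hck⟩ := T.bijOn.surjOn hmem
  have hc' : c ∈ μ := by simpa [YoungDiagram.mem_cells] using hc
  have h : ∃ c, c ∈ μ ∧ T.entry c.1 c.2 = k := ⟨c, hc', hck⟩
  rw [pos, dif_pos h]
  exact h.choose_spec

lemma pos_mem (T : SYT μ) {k : ℕ} (hk : 1 ≤ k) (hk' : k ≤ μ.card) : pos T k ∈ μ :=
  (pos_spec T hk hk').1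

lemma entry_pos (T : SYT μ) {k : ℕ} (hk : 1 ≤ k) (hk' : k ≤ μ.card) :
    T.entry (pos T k).1 (pos T k).2 = k := (pos_spec T hk hk').2

lemma pos_uniq (T : SYT μ) {k : ℕ} {c : ℕ × ℕ} (hc : c ∈ μ) (he : T.entry c.1 c.2 = k) :
    pos T k = c := by
  have hk : k ∈ Set.Icc 1 μ.card := he ▸ entry_mem T hc
  have hs := pos_spec T hk.1 hk.2
  exact T.bijOn.injOn (mem_coe_cells hs.1) (mem_coe_cells hc) (by simp [hs.2, he])

/-- entries `k`, `k+1` in the same row are adjacent -/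
lemma same_row_adj (T : SYT μ) {k : ℕ} (hk : 1 ≤ k) (hk' : k + 1 ≤ μ.card)
    (hrow : (pos T k).1 = (pos T (k+1)).1) :
    pos T (k+1) = ((pos T k).1, (pos T k).2 + 1) := by
  obtain ⟨p, hp⟩ : ∃ p, pos T k = p := ⟨_, rfl⟩
  obtain ⟨q, hq⟩ : ∃ q, pos T (k+1) = q := ⟨_, rfl⟩
  rw [hp, hq] at hrow ⊢
  have hpm : p ∈ μ := hp ▸ pos_mem T hk (le_trans (Nat.le_succ k) hk')
  have hqm : q ∈ μ := hq ▸ pos_mem T (by omega) hk'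
  have hep : T.entry p.1 p.2 = k := hp ▸ entry_pos T hk (by omega)
  have heq : T.entry q.1 q.2 = k + 1 := hq ▸ entry_pos T (by omega) hk'
  -- p.2 < q.2
  have h2 : p.2 < q.2 := by
    rcases lt_trichotomy p.2 q.2 with h | h | h
    · exact h
    · have hpq : p = q := Prod.ext hrow h
      rw [hpq, heq] at hep; omega
    · have := entry_lt T hpm (le_of_eq hrow.symm) (le_of_lt h)
        (fun hc => by rw [hc] at h; omega)
      rw [hep, heq] at this; omega
  have hadj : q.2 = p.2 + 1 := by
    by_contra hne
    have hmid : (p.1, p.2 + 1) ∈ μ := μ.up_left_mem (le_of_eq hrow) (by omega) hqm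
    have l1 : T.entry p.1 p.2 < T.entry p.1 (p.2+1) := T.row_strict (by omega) hmid
    have hlt : p.2 + 1 < q.2 := by omega
    have l2 : T.entry p.1 (p.2+1) < T.entry q.1 q.2 := by
      rw [hrow]; exact T.row_strict hlt (by simpa using hqm)
    rw [hep] at l1; rw [heq] at l2; omega
  calc q = (q.1, q.2) := rfl
    _ = (p.1, p.2 + 1) := by rw [← hrow, hadj]

/-- entries `k`, `k+1` in the same column are adjacent -/
lemma same_col_adj (T : SYT μ) {k : ℕ} (hk : 1 ≤ k) (hk' : k + 1 ≤ μ.card)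
    (hcol : (pos T k).2 = (pos T (k+1)).2) :
    pos T (k+1) = ((pos T k).1 + 1, (pos T k).2) := by
  obtain ⟨p, hp⟩ : ∃ p, pos T k = p := ⟨_, rfl⟩
  obtain ⟨q, hq⟩ : ∃ q, pos T (k+1) = q := ⟨_, rfl⟩
  rw [hp, hq] at hcol ⊢
  have hpm : p ∈ μ := hp ▸ pos_mem T hk (le_trans (Nat.le_succ k) hk')
  have hqm : q ∈ μ := hq ▸ pos_mem T (by omega) hk'
  have hep : T.entry p.1 p.2 = k := hp ▸ entry_pos T hk (by omega)
  have heq : T.entry q.1 q.2 = k + 1 := hq ▸ entry_pos T (by omega) hk'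
  have h1 : p.1 < q.1 := by
    rcases lt_trichotomy p.1 q.1 with h | h | h
    · exact h
    · have hpq : p = q := Prod.ext h hcol
      rw [hpq, heq] at hep; omega
    · have := entry_lt T hpm (le_of_lt h) (le_of_eq hcol.symm)
        (fun hc => by rw [hc] at h; omega)
      rw [hep, heq] at this; omega
  have hadj : q.1 = p.1 + 1 := by
    by_contra hne
    have hmid : (p.1 + 1, p.2) ∈ μ := μ.up_left_mem (by omega) (le_of_eq hcol) hqm
    have l1 : T.entry p.1 p.2 < T.entry (p.1+1) p.2 := T.col_strict (by omega) hmid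
    have hlt : p.1 + 1 < q.1 := by omega
    have l2 : T.entry (p.1+1) p.2 < T.entry q.1 q.2 := by
      rw [hcol]; exact T.col_strict hlt (by simpa using hqm)
    rw [hep] at l1; rw [heq] at l2; omega
  calc q = (q.1, q.2) := rfl
    _ = (p.1 + 1, p.2) := by rw [← hcol, hadj]

instance : Finite (SYT μ) := by
  let f : SYT μ → (↥(μ.cells : Set (ℕ × ℕ)) → Fin (μ.card + 1)) := fun T c =>
    ⟨T.entry c.1.1 c.1.2, by
      have := T.bijOn.mapsTo c.2
      have : T.entry c.1.1 c.1.2 ≤ μ.card := this.2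
      omega⟩
  have hinj : Function.Injective f := by
    intro T S h
    apply SYT.ext'
    funext i j
    by_cases hij : (i, j) ∈ μ
    · have := congrFun h ⟨(i, j), mem_coe_cells hij⟩
      simpa [f, Fin.ext_iff] using this
    · rw [T.zeros hij, S.zeros hij]
  exact Finite.of_injective f hinj

noncomputable instance : Fintype (SYT μ) := Fintype.ofFinite _


attribute [local instance] Classical.propDecidable

/-- validity condition for swapping the entries `k` and `k+1` -/
def Valid (T : SYT μ) (k : ℕ) : Prop :=
  1 ≤ k ∧ k + 1 ≤ μ.card ∧ (pos T k).1 ≠ (pos T (k+1)).1 ∧ (pos T k).2 ≠ (pos T (k+1)).2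

lemma swap_lt_swap {k a b : ℕ} (h : a < b) (hab : ¬(a = k ∧ b = k + 1)) :
    Equiv.swap k (k+1) a < Equiv.swap k (k+1) b := by
  simp only [Equiv.swap_apply_def]
  split_ifs <;> omega

lemma swap_mem_Icc {k a n : ℕ} (hk : 1 ≤ k) (hk' : k + 1 ≤ n) (ha : a ∈ Set.Icc 1 n) :
    Equiv.swap k (k+1) a ∈ Set.Icc 1 n := by
  simp only [Equiv.swap_apply_def]
  simp only [Set.mem_Icc] at ha ⊢
  split_ifs <;> omega

noncomputable def swapT (T : SYT μ) (k : ℕ) : SYT μ :=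
  if h : Valid T k then
    { entry := fun i j => Equiv.swap k (k+1) (T.entry i j)
      row_strict := by
        intro i j1 j2 hj hq
        by_cases h1 : (i, j1) ∈ μ
        · refine swap_lt_swap (T.row_strict hj hq) ?_
          rintro ⟨e1, e2⟩
          have p1 : pos T k = (i, j1) := pos_uniq T h1 e1
          have p2 : pos T (k+1) = (i, j2) := pos_uniq T hq e2
          exact h.2.2.1 (by rw [p1, p2])
        · have hz : T.entry i j1 = 0 := T.zeros h1
          have h2 : 1 ≤ T.entry i j2 := (entry_mem T hq).1
          have : Equiv.swap k (k+1) (T.entry i j2) ∈ Set.Icc 1 μ.card :=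
            swap_mem_Icc h.1 h.2.1 (entry_mem T hq)
          have hz' : Equiv.swap k (k+1) (T.entry i j1) = 0 := by
            rw [hz]; exact Equiv.swap_apply_of_ne_of_ne (by have := h.1; omega) (by have := h.1; omega)
          show Equiv.swap k (k+1) (T.entry i j1) < Equiv.swap k (k+1) (T.entry i j2)
          rw [hz']; exact this.1
      col_strict := by
        intro i1 i2 j hi hq
        by_cases h1 : (i1, j) ∈ μ
        · refine swap_lt_swap (T.col_strict hi hq) ?_
          rintro ⟨e1, e2⟩
          have p1 : pos T k = (i1, j) := pos_uniq T h1 e1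
          have p2 : pos T (k+1) = (i2, j) := pos_uniq T hq e2
          exact h.2.2.2 (by rw [p1, p2])
        · have hz : T.entry i1 j = 0 := T.zeros h1
          have : Equiv.swap k (k+1) (T.entry i2 j) ∈ Set.Icc 1 μ.card :=
            swap_mem_Icc h.1 h.2.1 (entry_mem T hq)
          have hz' : Equiv.swap k (k+1) (T.entry i1 j) = 0 := by
            rw [hz]; exact Equiv.swap_apply_of_ne_of_ne (by have := h.1; omega) (by have := h.1; omega)
          show Equiv.swap k (k+1) (T.entry i1 j) < Equiv.swap k (k+1) (T.entry i2 j)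
          rw [hz']; exact this.1
      zeros := by
        intro i j hij
        show Equiv.swap k (k+1) (T.entry i j) = 0
        rw [T.zeros hij]
        exact Equiv.swap_apply_of_ne_of_ne (by have := h.1; omega) (by have := h.1; omega)
      bijOn := by
        have hb : Set.BijOn (Equiv.swap k (k+1)) (Set.Icc 1 μ.card) (Set.Icc 1 μ.card) := by
          refine ⟨fun a ha => swap_mem_Icc h.1 h.2.1 ha, (Equiv.swap k (k+1)).injective.injOn, ?_⟩
          intro a ha
          refine ⟨Equiv.swap k (k+1) a, swap_mem_Icc h.1 h.2.1 ha, ?_⟩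
          simp
        exact hb.comp T.bijOn }
  else T

lemma swapT_of_not_valid {T : SYT μ} {k : ℕ} (h : ¬ Valid T k) : swapT T k = T := by
  rw [swapT, dif_neg h]

lemma swapT_entry {T : SYT μ} {k : ℕ} (h : Valid T k) (i j : ℕ) :
    (swapT T k).entry i j = Equiv.swap k (k+1) (T.entry i j) := by
  rw [swapT, dif_pos h]

lemma pos_swapT_left {T : SYT μ} {k : ℕ} (h : Valid T k) :
    pos (swapT T k) k = pos T (k+1) := by
  have hm : pos T (k+1) ∈ μ := pos_mem T (by omega) h.2.1
  refine pos_uniq _ hm ?_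
  rw [swapT_entry h, entry_pos T (by omega : 1 ≤ k+1) h.2.1, Equiv.swap_apply_right]

lemma pos_swapT_right {T : SYT μ} {k : ℕ} (h : Valid T k) :
    pos (swapT T k) (k+1) = pos T k := by
  have hm : pos T k ∈ μ := pos_mem T h.1 (by have := h.2.1; omega)
  refine pos_uniq _ hm ?_
  rw [swapT_entry h, entry_pos T h.1 (by have := h.2.1; omega : k ≤ μ.card), Equiv.swap_apply_left]

lemma pos_swapT_other {T : SYT μ} {k v : ℕ} (h : Valid T k) (hv1 : 1 ≤ v) (hv2 : v ≤ μ.card)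
    (hvk : v ≠ k) (hvk1 : v ≠ k + 1) : pos (swapT T k) v = pos T v := by
  have hm : pos T v ∈ μ := pos_mem T hv1 hv2
  refine pos_uniq _ hm ?_
  rw [swapT_entry h, entry_pos T hv1 hv2, Equiv.swap_apply_of_ne_of_ne hvk hvk1]

lemma valid_swapT {T : SYT μ} {k : ℕ} (h : Valid T k) : Valid (swapT T k) k := by
  refine ⟨h.1, h.2.1, ?_, ?_⟩ <;>
    rw [pos_swapT_left h, pos_swapT_right h]
  · exact h.2.2.1.symm
  · exact h.2.2.2.symm

lemma swapT_swapT {T : SYT μ} {k : ℕ} (h : Valid T k) : swapT (swapT T k) k = T := by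
  apply SYT.ext'
  funext i j
  rw [swapT_entry (valid_swapT h), swapT_entry h, Equiv.swap_apply_self]

/-- `k+1` directly below `k`, and `k+2` in the same row as `k+1`: impossible. -/
lemma hook1_false (T : SYT μ) {k : ℕ} (hk : 1 ≤ k) (hk2 : k + 2 ≤ μ.card)
    (hcol : (pos T k).2 = (pos T (k+1)).2) (hrow : (pos T (k+1)).1 = (pos T (k+2)).1) :
    False := by
  have h21 : pos T (k+1) = ((pos T k).1 + 1, (pos T k).2) := same_col_adj T hk (by omega) hcol
  have h32 : pos T (k+2) = ((pos T (k+1)).1, (pos T (k+1)).2 + 1) :=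
    same_row_adj T (by omega) (by omega) hrow
  have hq3 : pos T (k+2) = ((pos T k).1 + 1, (pos T k).2 + 1) := by
    rw [h32, h21]
  have hmidmem : ((pos T k).1, (pos T k).2 + 1) ∈ μ := by
    have := pos_mem T (by omega : 1 ≤ k + 2) hk2
    rw [hq3] at this
    exact μ.up_left_mem (by omega) le_rfl this
  have hv1 : T.entry (pos T k).1 (pos T k).2 < T.entry (pos T k).1 ((pos T k).2 + 1) :=
    T.row_strict (by omega) hmidmem
  have hv2 : T.entry (pos T k).1 ((pos T k).2 + 1) <
      T.entry ((pos T k).1 + 1) ((pos T k).2 + 1) := by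
    apply T.col_strict (by omega)
    have := pos_mem T (by omega : 1 ≤ k + 2) hk2
    rwa [hq3] at this
  rw [entry_pos T hk (by omega)] at hv1
  have he3 : T.entry ((pos T k).1 + 1) ((pos T k).2 + 1) = k + 2 := by
    have := entry_pos T (by omega : 1 ≤ k + 2) hk2
    rw [hq3] at this; exact this
  rw [he3] at hv2
  have hvk : T.entry (pos T k).1 ((pos T k).2 + 1) = k + 1 := by omega
  have := pos_uniq T hmidmem hvk
  rw [h21] at this
  have := congrArg Prod.fst this
  simp at this

/-- `k+1` directly right of `k`, and `k+2` directly below `k+1`: impossible. -/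
lemma hook2_false (T : SYT μ) {k : ℕ} (hk : 1 ≤ k) (hk2 : k + 2 ≤ μ.card)
    (hrow : (pos T k).1 = (pos T (k+1)).1) (hcol : (pos T (k+1)).2 = (pos T (k+2)).2) :
    False := by
  have h21 : pos T (k+1) = ((pos T k).1, (pos T k).2 + 1) := same_row_adj T hk (by omega) hrow
  have h32 : pos T (k+2) = ((pos T (k+1)).1 + 1, (pos T (k+1)).2) :=
    same_col_adj T (by omega) (by omega) hcol
  have hq3 : pos T (k+2) = ((pos T k).1 + 1, (pos T k).2 + 1) := by
    rw [h32, h21]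
  have hmidmem : ((pos T k).1 + 1, (pos T k).2) ∈ μ := by
    have := pos_mem T (by omega : 1 ≤ k + 2) hk2
    rw [hq3] at this
    exact μ.up_left_mem le_rfl (by omega) this
  have hv1 : T.entry (pos T k).1 (pos T k).2 < T.entry ((pos T k).1 + 1) (pos T k).2 :=
    T.col_strict (by omega) hmidmem
  have hv2 : T.entry ((pos T k).1 + 1) (pos T k).2 <
      T.entry ((pos T k).1 + 1) ((pos T k).2 + 1) := by
    apply T.row_strict (by omega)
    have := pos_mem T (by omega : 1 ≤ k + 2) hk2
    rwa [hq3] at this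
  rw [entry_pos T hk (by omega)] at hv1
  have he3 : T.entry ((pos T k).1 + 1) ((pos T k).2 + 1) = k + 2 := by
    have := entry_pos T (by omega : 1 ≤ k + 2) hk2
    rw [hq3] at this; exact this
  rw [he3] at hv2
  have hvk : T.entry ((pos T k).1 + 1) (pos T k).2 = k + 1 := by omega
  have := pos_uniq T hmidmem hvk
  rw [h21] at this
  have := congrArg Prod.fst this
  simp at this

lemma swapT_ne {T : SYT μ} {k : ℕ} (h : Valid T k) : swapT T k ≠ T := by
  intro he
  have := congrArg (fun S : SYT μ => S.entry (pos T k).1 (pos T k).2) he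
  simp only [swapT_entry h] at this
  rw [entry_pos T h.1 (by have := h.2.1; omega), Equiv.swap_apply_left] at this
  omega

lemma fA_zero_of_not_valid {T : SYT μ} {k : ℕ} (hk : 1 ≤ k) (hk' : k + 1 ≤ μ.card)
    (h : ¬ Valid T k) :
    (((pos T (k+1)).2 : ℤ) - (pos T (k+1)).1 - (pos T k).2 + (pos T k).1 - 1
      + (if (pos T k).1 < (pos T (k+1)).1 then 2 else 0)) = 0 := by
  have : (pos T k).1 = (pos T (k+1)).1 ∨ (pos T k).2 = (pos T (k+1)).2 := by
    by_contra hc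
    push_neg at hc
    exact h ⟨hk, hk', hc.1, hc.2⟩
  rcases this with hr | hc
  · have := same_row_adj T hk hk' hr
    rw [this]
    simp only [hr]
    split_ifs <;> omega
  · have := same_col_adj T hk hk' hc
    rw [this]
    simp only [hc]
    split_ifs <;> omega

/-- Lemma A: the content-difference telescoping identity. -/
lemma lemA {k : ℕ} (hk : 1 ≤ k) (hk' : k + 1 ≤ μ.card) :
    ∑ T : SYT μ, (((pos T (k+1)).2 : ℤ) - (pos T (k+1)).1 - (pos T k).2 + (pos T k).1 - 1
      + (if (pos T k).1 < (pos T (k+1)).1 then 2 else 0)) = 0 := by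
  classical
  apply Finset.sum_ninvolution (g := fun T => swapT T k)
  · intro T
    by_cases h : Valid T k
    · have e1 := pos_swapT_left h
      have e2 := pos_swapT_right h
      rw [e1, e2]
      have hne := h.2.2.1
      split_ifs <;> omega
    · rw [swapT_of_not_valid h]
      have := fA_zero_of_not_valid hk hk' h
      omega
  · intro T hfne
    by_cases h : Valid T k
    · exact swapT_ne h
    · exact absurd (fA_zero_of_not_valid hk hk' h) hfne
  · intro T; exact mem_univ _
  · intro T
    by_cases h : Valid T k
    · exact swapT_swapT h
    · rw [swapT_of_not_valid h, swapT_of_not_valid h]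

lemma pos_swapT_left' {T : SYT μ} {k : ℕ} (h : Valid T (k+1)) :
    pos (swapT T (k+1)) (k+1) = pos T (k+2) := pos_swapT_left h

lemma pos_swapT_right' {T : SYT μ} {k : ℕ} (h : Valid T (k+1)) :
    pos (swapT T (k+1)) (k+2) = pos T (k+1) := pos_swapT_right h

lemma same_col_adj' (T : SYT μ) {k : ℕ} (hk2 : k + 2 ≤ μ.card)
    (hcol : (pos T (k+1)).2 = (pos T (k+2)).2) :
    pos T (k+2) = ((pos T (k+1)).1 + 1, (pos T (k+1)).2) :=
  same_col_adj T (by omega) (by omega) hcol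

noncomputable def iot (T : SYT μ) (k : ℕ) : SYT μ :=
  if ((pos T k).1 < (pos T (k+1)).1 ↔ (pos T (k+1)).1 < (pos T (k+2)).1) then T
  else if ((pos T k).1 < (pos T (k+1)).1 ↔ (pos T k).1 < (pos T (k+2)).1) then swapT T k
  else swapT T (k+1)

lemma iot_master {k : ℕ} (hk : 1 ≤ k) (hk2 : k + 2 ≤ μ.card) (T : SYT μ) :
    (iot T k = T ∧ ((pos T k).1 < (pos T (k+1)).1 ↔ (pos T (k+1)).1 < (pos T (k+2)).1))
    ∨ (iot (iot T k) k = T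
      ∧ ((pos T k).1 < (pos T (k+1)).1 ↔ ¬ ((pos (iot T k) k).1 < (pos (iot T k) (k+1)).1))
      ∧ ((pos T (k+1)).1 < (pos T (k+2)).1 ↔
          ¬ ((pos (iot T k) (k+1)).1 < (pos (iot T k) (k+2)).1))) := by
  classical
  by_cases hPQ : ((pos T k).1 < (pos T (k+1)).1 ↔ (pos T (k+1)).1 < (pos T (k+2)).1)
  · left
    exact ⟨by rw [iot, if_pos hPQ], hPQ⟩
  · right
    by_cases hP : (pos T k).1 < (pos T (k+1)).1
    · have hQ : ¬ (pos T (k+1)).1 < (pos T (k+2)).1 := fun hq => hPQ ⟨fun _ => hq, fun _ => hP⟩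
      by_cases hR : (pos T k).1 < (pos T (k+2)).1
      · -- U, swap at k
        have hvalid : Valid T k := by
          refine ⟨hk, by omega, by omega, ?_⟩
          intro hc
          have hadj := same_col_adj T hk (by omega) hc
          have h21 : (pos T (k+1)).1 = (pos T k).1 + 1 := by rw [hadj]
          have hrow : (pos T (k+1)).1 = (pos T (k+2)).1 := by omega
          exact hook1_false T hk hk2 hc hrow
        have hiot : iot T k = swapT T k := by
          rw [iot, if_neg hPQ, if_pos ⟨fun _ => hR, fun _ => hP⟩]
        have e1 : pos (iot T k) k = pos T (k+1) := by rw [hiot]; exact pos_swapT_left hvalid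
        have e2 : pos (iot T k) (k+1) = pos T k := by rw [hiot]; exact pos_swapT_right hvalid
        have e3 : pos (iot T k) (k+2) = pos T (k+2) := by
          rw [hiot]; exact pos_swapT_other hvalid (by omega) (by omega) (by omega) (by omega)
        refine ⟨?_, ?_, ?_⟩
        · rw [hiot, iot, if_neg, if_pos]
          · exact swapT_swapT hvalid
          · rw [pos_swapT_left hvalid, pos_swapT_right hvalid,
              pos_swapT_other hvalid (by omega) (by omega) (by omega) (by omega)]
            exact ⟨fun h => absurd h (by omega), fun h => absurd h hQ⟩
          · rw [pos_swapT_left hvalid, pos_swapT_right hvalid,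
              pos_swapT_other hvalid (by omega) (by omega) (by omega) (by omega)]
            intro hif
            exact absurd (hif.mpr hR) (by omega)
        · rw [e1, e2]; constructor
          · intro _; omega
          · intro _; exact hP
        · rw [e2, e3]; constructor
          · intro hq; exact absurd hq hQ
          · intro hn; exact absurd hR hn
      · -- U, swap at k+1
        have hvalid : Valid T (k+1) := by
          refine ⟨by omega, by omega,
            (by show (pos T (k+1)).1 ≠ (pos T (k+2)).1; omega), ?_⟩
          intro hc
          have hadj := same_col_adj' T hk2 hc
          have h32 : (pos T (k+2)).1 = (pos T (k+1)).1 + 1 := by rw [hadj]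
          omega
        have hiot : iot T k = swapT T (k+1) := by
          rw [iot, if_neg hPQ, if_neg]
          intro hif
          exact absurd (hif.mp hP) hR
        have e1 : pos (iot T k) k = pos T k := by
          rw [hiot]; exact pos_swapT_other hvalid (by omega) (by omega) (by omega) (by omega)
        have e2 : pos (iot T k) (k+1) = pos T (k+2) := by
          rw [hiot]; exact pos_swapT_left' hvalid
        have e3 : pos (iot T k) (k+2) = pos T (k+1) := by
          rw [hiot]; exact pos_swapT_right' hvalid
        refine ⟨?_, ?_, ?_⟩
        · rw [hiot, iot, if_neg, if_neg]
          · exact swapT_swapT hvalid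
          · rw [pos_swapT_other hvalid (by omega) (by omega) (by omega) (by omega),
              pos_swapT_left' hvalid, pos_swapT_right' hvalid]
            intro hif
            exact absurd (hif.mpr hP) (by omega)
          · rw [pos_swapT_other hvalid (by omega) (by omega) (by omega) (by omega),
              pos_swapT_left' hvalid, pos_swapT_right' hvalid]
            intro hif
            exact absurd (hif.mpr (by omega)) (by omega)
        · rw [e1, e2]; constructor
          · intro _; omega
          · intro _; exact hP
        · rw [e2, e3]; constructor
          · intro hq; exact absurd hq hQ
          · intro hn; exact absurd (by omega : (pos T (k+2)).1 < (pos T (k+1)).1) hn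
    · have hQ : (pos T (k+1)).1 < (pos T (k+2)).1 := by
        by_contra hq
        exact hPQ ⟨fun hp => absurd hp hP, fun hq' => absurd hq' hq⟩
      by_cases hR : (pos T k).1 < (pos T (k+2)).1
      · -- V, swap at k+1
        have hvalid : Valid T (k+1) := by
          refine ⟨by omega, by omega,
            (by show (pos T (k+1)).1 ≠ (pos T (k+2)).1; omega), ?_⟩
          intro hc
          have hadj := same_col_adj' T hk2 hc
          have h32 : (pos T (k+2)).1 = (pos T (k+1)).1 + 1 := by rw [hadj]
          have hrow : (pos T k).1 = (pos T (k+1)).1 := by omega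
          exact hook2_false T hk hk2 hrow hc
        have hiot : iot T k = swapT T (k+1) := by
          rw [iot, if_neg hPQ, if_neg]
          intro hif
          exact absurd (hif.mpr hR) hP
        have e1 : pos (iot T k) k = pos T k := by
          rw [hiot]; exact pos_swapT_other hvalid (by omega) (by omega) (by omega) (by omega)
        have e2 : pos (iot T k) (k+1) = pos T (k+2) := by
          rw [hiot]; exact pos_swapT_left' hvalid
        have e3 : pos (iot T k) (k+2) = pos T (k+1) := by
          rw [hiot]; exact pos_swapT_right' hvalid
        refine ⟨?_, ?_, ?_⟩
        · rw [hiot, iot, if_neg, if_neg]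
          · exact swapT_swapT hvalid
          · rw [pos_swapT_other hvalid (by omega) (by omega) (by omega) (by omega),
              pos_swapT_left' hvalid, pos_swapT_right' hvalid]
            intro hif
            exact absurd (hif.mp hR) (by omega)
          · rw [pos_swapT_other hvalid (by omega) (by omega) (by omega) (by omega),
              pos_swapT_left' hvalid, pos_swapT_right' hvalid]
            intro hif
            exact absurd (hif.mp hR) (by omega)
        · rw [e1, e2]; constructor
          · intro hp; exact absurd hp hP
          · intro hn; exact absurd hR hn
        · rw [e2, e3]; constructor
          · intro _; omega
          · intro _; exact hQ
      · -- V, swap at k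
        have hvalid : Valid T k := by
          refine ⟨hk, by omega, by omega, ?_⟩
          intro hc
          have hadj := same_col_adj T hk (by omega) hc
          have h21 : (pos T (k+1)).1 = (pos T k).1 + 1 := by rw [hadj]
          omega
        have hiot : iot T k = swapT T k := by
          rw [iot, if_neg hPQ, if_pos ⟨fun hp => absurd hp hP, fun hr => absurd hr hR⟩]
        have e1 : pos (iot T k) k = pos T (k+1) := by rw [hiot]; exact pos_swapT_left hvalid
        have e2 : pos (iot T k) (k+1) = pos T k := by rw [hiot]; exact pos_swapT_right hvalid
        have e3 : pos (iot T k) (k+2) = pos T (k+2) := by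
          rw [hiot]; exact pos_swapT_other hvalid (by omega) (by omega) (by omega) (by omega)
        have hne : (pos T (k+1)).1 < (pos T k).1 := by
          have := hvalid.2.2.1
          omega
        refine ⟨?_, ?_, ?_⟩
        · rw [hiot, iot, if_neg, if_pos]
          · exact swapT_swapT hvalid
          · rw [pos_swapT_left hvalid, pos_swapT_right hvalid,
              pos_swapT_other hvalid (by omega) (by omega) (by omega) (by omega)]
            exact ⟨fun _ => hQ, fun _ => hne⟩
          · rw [pos_swapT_left hvalid, pos_swapT_right hvalid,
              pos_swapT_other hvalid (by omega) (by omega) (by omega) (by omega)]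
            intro hif
            exact absurd (hif.mp hne) hR
        · rw [e1, e2]; constructor
          · intro hp; exact absurd hp hP
          · intro hn; exact absurd hne hn
        · rw [e2, e3]; constructor
          · intro _; omega
          · intro _; exact hQ

/-- Lemma B: the number of descents at `k` equals the number of descents at `k+1`. -/
lemma lemB {k : ℕ} (hk : 1 ≤ k) (hk2 : k + 2 ≤ μ.card) :
    ∑ T : SYT μ, ((if (pos T (k+1)).1 < (pos T (k+2)).1 then (1:ℤ) else 0)
      - (if (pos T k).1 < (pos T (k+1)).1 then 1 else 0)) = 0 := by
  classical
  apply Finset.sum_ninvolution (g := fun T => iot T k)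
  · intro T
    rcases iot_master hk hk2 T with ⟨h1, h2⟩ | ⟨h1, hP, hQ⟩
    · rw [h1]
      by_cases hp : (pos T k).1 < (pos T (k+1)).1
      · rw [if_pos hp, if_pos (h2.mp hp)]; ring
      · rw [if_neg hp, if_neg (fun hq => hp (h2.mpr hq))]; ring
    · by_cases hp : (pos T k).1 < (pos T (k+1)).1 <;>
        by_cases hq : (pos T (k+1)).1 < (pos T (k+2)).1
      · rw [if_pos hp, if_pos hq, if_neg (hP.mp hp), if_neg (hQ.mp hq)]; ring
      · have hq' : (pos (iot T k) (k+1)).1 < (pos (iot T k) (k+2)).1 := by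
          by_contra hc; exact hq (hQ.mpr hc)
        rw [if_pos hp, if_neg hq, if_neg (hP.mp hp), if_pos hq']; ring
      · have hp' : (pos (iot T k) k).1 < (pos (iot T k) (k+1)).1 := by
          by_contra hc; exact hp (hP.mpr hc)
        rw [if_neg hp, if_pos hq, if_pos hp', if_neg (hQ.mp hq)]; ring
      · have hp' : (pos (iot T k) k).1 < (pos (iot T k) (k+1)).1 := by
          by_contra hc; exact hp (hP.mpr hc)
        have hq' : (pos (iot T k) (k+1)).1 < (pos (iot T k) (k+2)).1 := by
          by_contra hc; exact hq (hQ.mpr hc)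
        rw [if_neg hp, if_neg hq, if_pos hp', if_pos hq']; ring
  · intro T hf
    rcases iot_master hk hk2 T with ⟨h1, h2⟩ | ⟨h1, hP, hQ⟩
    · exfalso; apply hf
      by_cases hp : (pos T k).1 < (pos T (k+1)).1
      · rw [if_pos hp, if_pos (h2.mp hp)]; ring
      · rw [if_neg hp, if_neg (fun hq => hp (h2.mpr hq))]; ring
    · intro heq
      rw [heq] at hP
      tauto
  · intro T; exact mem_univ _
  · intro T
    rcases iot_master hk hk2 T with ⟨h1, _⟩ | ⟨h1, _, _⟩
    · rw [h1, h1]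
    · exact h1

noncomputable def psi (μ : YoungDiagram) (k : ℕ) : ℤ :=
  ∑ T : SYT μ, (((pos T k).2 : ℤ) - (pos T k).1)

noncomputable def dcount (μ : YoungDiagram) (k : ℕ) : ℕ :=
  (univ.filter (fun T : SYT μ => (pos T k).1 < (pos T (k+1)).1)).card

noncomputable def NN (μ : YoungDiagram) : ℕ := (univ : Finset (SYT μ)).card

lemma sum_ite_two {p : SYT μ → Prop} [DecidablePred p] :
    ∑ T : SYT μ, (if p T then (2:ℤ) else 0) = 2 * (univ.filter p).card := by
  rw [Finset.sum_congr rfl (fun T _ => by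
    show (if p T then (2:ℤ) else 0) = 2 * (if p T then 1 else 0)
    split_ifs <;> ring)]
  rw [← Finset.mul_sum, Finset.sum_boole]

lemma step1 {k : ℕ} (hk : 1 ≤ k) (hk' : k + 1 ≤ μ.card) :
    psi μ (k+1) = psi μ k + NN μ - 2 * dcount μ k := by
  classical
  have h := lemA (μ := μ) hk hk'
  simp only [Finset.sum_add_distrib, Finset.sum_sub_distrib] at h
  rw [Finset.sum_const, sum_ite_two] at h
  have h1 : psi μ (k+1) = (∑ T : SYT μ, ((pos T (k+1)).2 : ℤ))
      - ∑ T : SYT μ, ((pos T (k+1)).1 : ℤ) := by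
    rw [psi, Finset.sum_sub_distrib]
  have h2 : psi μ k = (∑ T : SYT μ, ((pos T k).2 : ℤ))
      - ∑ T : SYT μ, ((pos T k).1 : ℤ) := by
    rw [psi, Finset.sum_sub_distrib]
  have h3 : ((univ : Finset (SYT μ)).card • (1:ℤ)) = (NN μ : ℤ) := by
    rw [NN]; simp
  rw [h3] at h
  rw [h1, h2, dcount]
  omega

lemma step2 {k : ℕ} (hk : 1 ≤ k) (hk2 : k + 2 ≤ μ.card) :
    dcount μ (k+1) = dcount μ k := by
  classical
  have h := lemB (μ := μ) hk hk2
  rw [Finset.sum_sub_distrib, Finset.sum_boole, Finset.sum_boole] at h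
  have : ((univ.filter fun T : SYT μ => (pos T (k+1)).1 < (pos T (k+2)).1).card : ℤ)
      = ((univ.filter fun T : SYT μ => (pos T k).1 < (pos T (k+1)).1).card : ℤ) := by omega
  rw [dcount, dcount]
  show (univ.filter fun T : SYT μ => (pos T (k+1)).1 < (pos T (k+2)).1).card
      = (univ.filter fun T : SYT μ => (pos T k).1 < (pos T (k+1)).1).card
  omega

lemma dconst {k : ℕ} (hk : 1 ≤ k) (hk' : k + 1 ≤ μ.card) : dcount μ k = dcount μ 1 := by
  induction k with
  | zero => omega
  | succ m ih =>
    rcases Nat.eq_or_lt_of_le hk with h | h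
    · simp [← h]
    · have hm : 1 ≤ m := by omega
      rw [step2 hm (by omega)]
      exact ih hm (by omega)

lemma psi_formula {k : ℕ} (hk : 1 ≤ k) (hk' : k ≤ μ.card) :
    psi μ k = ((k : ℤ) - 1) * ((NN μ : ℤ) - 2 * dcount μ 1) := by
  induction k with
  | zero => omega
  | succ m ih =>
    rcases Nat.eq_or_lt_of_le hk with h | h
    · -- m + 1 = 1, i.e. m = 0 : psi 1 = 0
      have hm : m = 0 := by omega
      subst hm
      have : psi μ 1 = 0 := by
        rw [psi]
        apply Finset.sum_eq_zero
        intro T _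
        have hm1 : pos T 1 = (0, 0) := by
          have hmem : pos T 1 ∈ μ := pos_mem T le_rfl (by omega)
          by_contra hne
          have h00 : (0,0) ∈ μ := μ.up_left_mem (Nat.zero_le _) (Nat.zero_le _) hmem
          have hlt := entry_lt T (p := (0,0)) hmem (Nat.zero_le _) (Nat.zero_le _)
            (fun hc => hne hc.symm)
          rw [entry_pos T le_rfl (by omega)] at hlt
          have := (entry_mem T h00).1
          omega
        rw [hm1]
        simp
      rw [this]
      simp
    · have hm : 1 ≤ m := by omega
      rw [step1 hm (by omega), ih hm (by omega), dconst hm (by omega)]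
      push_cast
      ring

lemma rowsum (T : SYT μ) :
    ∑ k ∈ Finset.Icc 1 μ.card, (((pos T k).2 : ℤ) - (pos T k).1)
      = ∑ c ∈ μ.cells, ((c.2 : ℤ) - c.1) := by
  apply Finset.sum_nbij' (i := fun k => pos T k) (j := fun c => T.entry c.1 c.2)
  · intro k hk
    rw [Finset.mem_Icc] at hk
    rw [YoungDiagram.mem_cells]
    exact pos_mem T hk.1 hk.2
  · intro c hc
    rw [YoungDiagram.mem_cells] at hc
    have := entry_mem T hc
    rw [Finset.mem_Icc]
    exact ⟨this.1, this.2⟩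
  · intro k hk
    rw [Finset.mem_Icc] at hk
    exact entry_pos T hk.1 hk.2
  · intro c hc
    rw [YoungDiagram.mem_cells] at hc
    exact pos_uniq T hc rfl
  · intro k hk
    rfl

lemma psi_total :
    ∑ k ∈ Finset.Icc 1 μ.card, psi μ k
      = (NN μ : ℤ) * ∑ c ∈ μ.cells, ((c.2 : ℤ) - c.1) := by
  simp only [psi]
  rw [Finset.sum_comm]
  rw [Finset.sum_congr rfl (fun T _ => rowsum T)]
  rw [Finset.sum_const, NN]
  simp [nsmul_eq_mul]

lemma gauss (n : ℕ) : (∑ k ∈ Finset.Icc 1 n, ((k : ℤ) - 1)) * 2 = n * (n - 1) := by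
  induction n with
  | zero => simp
  | succ m ih =>
    rw [Finset.sum_Icc_succ_top (by omega), add_mul, ih]
    push_cast
    ring

lemma main_count (h2 : 2 ≤ μ.card) :
    ((NN μ : ℤ) - 2 * dcount μ 1) * (μ.card * ((μ.card : ℤ) - 1))
      = 2 * (NN μ : ℤ) * ∑ c ∈ μ.cells, ((c.2 : ℤ) - c.1) := by
  have htot := psi_total (μ := μ)
  have hform : ∑ k ∈ Finset.Icc 1 μ.card, psi μ k
      = (∑ k ∈ Finset.Icc 1 μ.card, ((k:ℤ) - 1)) * ((NN μ : ℤ) - 2 * dcount μ 1) := by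
    rw [Finset.sum_mul]
    apply Finset.sum_congr rfl
    intro k hk
    rw [Finset.mem_Icc] at hk
    exact psi_formula hk.1 hk.2
  have hg := gauss μ.card
  calc ((NN μ : ℤ) - 2 * dcount μ 1) * (μ.card * ((μ.card : ℤ) - 1))
      = ((NN μ : ℤ) - 2 * dcount μ 1) * ((∑ k ∈ Finset.Icc 1 μ.card, ((k:ℤ) - 1)) * 2) := by
        rw [hg]
    _ = 2 * ((∑ k ∈ Finset.Icc 1 μ.card, ((k:ℤ) - 1)) * ((NN μ : ℤ) - 2 * dcount μ 1)) := by
        ring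
    _ = 2 * (NN μ : ℤ) * ∑ c ∈ μ.cells, ((c.2 : ℤ) - c.1) := by
        rw [← hform, htot]; ring

lemma row_lt_card {i j : ℕ} (h : (i, j) ∈ μ) : i < μ.card := by
  have hsub : (Finset.range (i+1)).image (fun i' => (i', j)) ⊆ μ.cells := by
    intro c hc
    simp only [Finset.mem_image, Finset.mem_range] at hc
    obtain ⟨i', hi', rfl⟩ := hc
    rw [YoungDiagram.mem_cells]
    exact μ.up_left_mem (by omega) le_rfl h
  have hcard := Finset.card_le_card hsub
  rw [Finset.card_image_of_injective _ (fun a b hab => by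
    simpa using congrArg Prod.fst hab), Finset.card_range] at hcard
  exact hcard

lemma col_lt_card {i j : ℕ} (h : (i, j) ∈ μ) : j < μ.card := by
  have hsub : (Finset.range (j+1)).image (fun j' => (i, j')) ⊆ μ.cells := by
    intro c hc
    simp only [Finset.mem_image, Finset.mem_range] at hc
    obtain ⟨j', hj', rfl⟩ := hc
    rw [YoungDiagram.mem_cells]
    exact μ.up_left_mem le_rfl (by omega) h
  have hcard := Finset.card_le_card hsub
  rw [Finset.card_image_of_injective _ (fun a b hab => by
    simpa using congrArg Prod.snd hab), Finset.card_range] at hcard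
  exact hcard

lemma colLen_le_card (j : ℕ) : μ.colLen j ≤ μ.card := by
  rcases Nat.eq_zero_or_pos (μ.colLen j) with h | h
  · omega
  · have : (μ.colLen j - 1, j) ∈ μ := by
      rw [YoungDiagram.mem_iff_lt_colLen]; omega
    have := row_lt_card this
    omega

lemma cells_sum (g : ℕ × ℕ → ℤ) :
    ∑ c ∈ μ.cells, g c
      = ∑ j ∈ Finset.range μ.card, ∑ i ∈ Finset.range (μ.colLen j), g (i, j) := by
  classical
  have hcells : μ.cells
      = ((Finset.range μ.card) ×ˢ (Finset.range μ.card)).filter (fun c => c ∈ μ) := by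
    ext c
    simp only [Finset.mem_filter, Finset.mem_product, Finset.mem_range,
      YoungDiagram.mem_cells]
    constructor
    · intro hc
      exact ⟨⟨row_lt_card (by simpa using hc), col_lt_card (by simpa using hc)⟩, hc⟩
    · exact fun hc => hc.2
  rw [hcells, Finset.sum_filter, Finset.sum_product_right]
  apply Finset.sum_congr rfl
  intro j _
  rw [← Finset.sum_subset (Finset.range_subset_range.mpr (colLen_le_card j))
    (fun i _ hni => by
      rw [if_neg]
      rw [Finset.mem_range] at hni
      rw [YoungDiagram.mem_iff_lt_colLen]
      omega)]
  apply Finset.sum_congr rfl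
  intro i hi
  rw [Finset.mem_range] at hi
  rw [if_pos (by rw [YoungDiagram.mem_iff_lt_colLen]; exact hi)]

lemma card_eq_sum_colLens : (μ.card : ℤ) = ∑ j ∈ Finset.range μ.card, (μ.colLen j : ℤ) := by
  have := cells_sum (μ := μ) (fun _ => 1)
  simp only [Finset.sum_const, nsmul_eq_mul, mul_one, Finset.card_range] at this
  rw [show ((μ.card : ℤ)) = ((μ.cells.card : ℕ) : ℤ) from rfl]
  exact this

lemma sq_expand (x : ℕ → ℤ) (n : ℕ) :
    2 * ∑ i ∈ Finset.range n, ∑ j ∈ Finset.range (i+1), x i * x j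
      = (∑ i ∈ Finset.range n, x i)^2 + ∑ i ∈ Finset.range n, (x i)^2 := by
  induction n with
  | zero => simp
  | succ m ih =>
    rw [Finset.sum_range_succ, Finset.sum_range_succ (f := fun i => x i),
      Finset.sum_range_succ (f := fun i => (x i)^2),
      Finset.sum_range_succ (f := fun j => x m * x j)]
    have hpull : ∑ j ∈ Finset.range m, x m * x j = x m * ∑ j ∈ Finset.range m, x j :=
      (Finset.mul_sum _ _ _).symm
    linear_combination ih + 2 * hpull

lemma gauss' (m : ℕ) : 2 * ∑ i ∈ Finset.range m, (i : ℤ) = m * (m - 1) := by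
  induction m with
  | zero => simp
  | succ p ih =>
    rw [Finset.sum_range_succ]
    push_cast
    linear_combination ih

/-- The key identity: `n(n-1) - 2e = 2S`. -/
lemma col_identity :
    (μ.card : ℤ) * ((μ.card : ℤ) - 1) - 2 * ∑ c ∈ μ.cells, ((c.2 : ℤ) - c.1)
      = 2 * ∑ i ∈ Finset.range μ.card, ∑ j ∈ Finset.range (i+1),
          (μ.colLen i : ℤ) * ((μ.colLen j : ℤ) - 1) := by
  classical
  set n := μ.card with hn
  set x : ℕ → ℤ := fun j => (μ.colLen j : ℤ) with hx
  have hP : (n : ℤ) = ∑ j ∈ Finset.range n, x j := card_eq_sum_colLens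
  -- e in terms of columns
  have he : 2 * ∑ c ∈ μ.cells, ((c.2 : ℤ) - c.1)
      = ∑ j ∈ Finset.range n, (2 * j * x j - x j * (x j - 1)) := by
    rw [cells_sum (fun c => ((c.2 : ℤ) - c.1)), Finset.mul_sum]
    apply Finset.sum_congr rfl
    intro j _
    have hsplit : ∑ i ∈ Finset.range (μ.colLen j), ((j : ℤ) - i)
        = (μ.colLen j) * (j : ℤ) - ∑ i ∈ Finset.range (μ.colLen j), (i : ℤ) := by
      rw [Finset.sum_sub_distrib, Finset.sum_const, Finset.card_range, nsmul_eq_mul]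
    rw [hsplit]
    have hg := gauss' (μ.colLen j)
    show 2 * ((μ.colLen j) * (j : ℤ) - ∑ i ∈ Finset.range (μ.colLen j), (i : ℤ))
        = 2 * j * x j - x j * (x j - 1)
    have hxj : x j = (μ.colLen j : ℤ) := rfl
    rw [hxj]
    linear_combination -hg
  -- S in terms of x
  have hS : ∑ i ∈ Finset.range n, ∑ j ∈ Finset.range (i+1), x i * (x j - 1)
      = (∑ i ∈ Finset.range n, ∑ j ∈ Finset.range (i+1), x i * x j)
        - ∑ i ∈ Finset.range n, ((i : ℤ) + 1) * x i := by
    rw [← Finset.sum_sub_distrib]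
    apply Finset.sum_congr rfl
    intro i _
    rw [Finset.sum_congr rfl (fun j _ => by ring :
      ∀ j ∈ Finset.range (i+1), x i * (x j - 1) = x i * x j - x i)]
    rw [Finset.sum_sub_distrib, Finset.sum_const, Finset.card_range, nsmul_eq_mul]
    push_cast
    ring
  have hsq := sq_expand x n
  -- assemble
  rw [he]
  show (n : ℤ) * ((n : ℤ) - 1) - ∑ j ∈ Finset.range n, (2 * j * x j - x j * (x j - 1))
      = 2 * ∑ i ∈ Finset.range n, ∑ j ∈ Finset.range (i+1), x i * (x j - 1)
  rw [Finset.sum_sub_distrib]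
  have hsum1 : ∑ j ∈ Finset.range n, (2 * (j:ℤ) * x j)
      = 2 * ∑ j ∈ Finset.range n, (j:ℤ) * x j := by
    rw [Finset.mul_sum]; apply Finset.sum_congr rfl; intro j _; ring
  have hsum2 : ∑ j ∈ Finset.range n, (x j * (x j - 1))
      = ∑ j ∈ Finset.range n, (x j)^2 - ∑ j ∈ Finset.range n, x j := by
    rw [← Finset.sum_sub_distrib]; apply Finset.sum_congr rfl; intro j _; ring
  have hsum3 : ∑ i ∈ Finset.range n, ((i : ℤ) + 1) * x i
      = ∑ i ∈ Finset.range n, (i : ℤ) * x i + ∑ i ∈ Finset.range n, x i := by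
    rw [← Finset.sum_add_distrib]; apply Finset.sum_congr rfl; intro i _; ring
  rw [hsum1, hsum2, hS, hsum3]
  linear_combination (-1 : ℤ) * hsq + ((n : ℤ) + (∑ j ∈ Finset.range n, x j) - 1) * hP

lemma descent_iff (h2 : 2 ≤ μ.card) (T : SYT μ) :
    T.DescentAt 1 ↔ (pos T 1).1 < (pos T (1+1)).1 := by
  constructor
  · intro h
    exact h (pos T 1) (pos T (1+1)) (pos_mem T le_rfl (by omega)) (pos_mem T (by omega) h2)
      (entry_pos T le_rfl (by omega)) (entry_pos T (by omega) h2)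
  · intro h c d hc hd h1 hd2
    have e1 : pos T 1 = c := pos_uniq T hc h1
    have e2 : pos T (1+1) = d := pos_uniq T hd hd2
    rw [← e1, ← e2]
    exact h

lemma descent_card (h2 : 2 ≤ μ.card) :
    Nat.card {T : SYT μ // T.DescentAt 1} = dcount μ 1 := by
  classical
  rw [Nat.card_eq_fintype_card, Fintype.card_subtype, dcount]
  congr 1
  apply Finset.filter_congr
  intro T _
  constructor
  · intro h; exact (descent_iff h2 T).mp h
  · intro h; exact (descent_iff h2 T).mpr h

lemma total_card : Nat.card (SYT μ) = NN μ := by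
  classical
  rw [Nat.card_eq_fintype_card, NN]
  rfl

lemma key_identity (h2 : 2 ≤ μ.card) :
    (dcount μ 1 : ℤ) * (μ.card * ((μ.card : ℤ) - 1))
      = (NN μ : ℤ) * ∑ i ∈ Finset.range μ.card, ∑ j ∈ Finset.range (i+1),
          (μ.colLen i : ℤ) * ((μ.colLen j : ℤ) - 1) := by
  have h1 := main_count (μ := μ) h2
  have h3 := col_identity (μ := μ)
  have hdouble : 2 * ((dcount μ 1 : ℤ) * (μ.card * ((μ.card : ℤ) - 1)))
      = 2 * ((NN μ : ℤ) * ∑ i ∈ Finset.range μ.card, ∑ j ∈ Finset.range (i+1),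
          (μ.colLen i : ℤ) * ((μ.colLen j : ℤ) - 1)) := by
    linear_combination (-(1:ℤ)) * h1 + (NN μ : ℤ) * h3
  linarith

end SYTAux

/-- The number of standard Young tableaux of shape `μ` with a descent at position `1`
equals `N · c_{λ'}` where `N` is the total number of SYT of shape `μ` and
`c_{λ'} = Σ_{i≥j} λ'ᵢ(λ'ⱼ−1)/(n(n−1))` (with `λ'ᵢ = μ.colLen i`, `n = μ.card`). -/
theorem descent_at_one_count (μ : YoungDiagram) (n : ℕ) (hn : μ.card = n) (h2 : 2 ≤ n) :
    (Nat.card {T : SYT μ // T.DescentAt 1} : ℝ) =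
      (Nat.card (SYT μ) : ℝ) *
        ∑ i ∈ Finset.range n, ∑ j ∈ Finset.range (i + 1),
          (μ.colLen i : ℝ) * ((μ.colLen j : ℝ) - 1) / (n * ((n : ℝ) - 1)) := by
  subst hn
  rw [SYTAux.descent_card h2, SYTAux.total_card]
  have key := SYTAux.key_identity (μ := μ) h2
  have hsum : ∑ i ∈ Finset.range μ.card, ∑ j ∈ Finset.range (i + 1),
      (μ.colLen i : ℝ) * ((μ.colLen j : ℝ) - 1) / (μ.card * ((μ.card : ℝ) - 1))
      = ((∑ i ∈ Finset.range μ.card, ∑ j ∈ Finset.range (i+1),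
          (μ.colLen i : ℤ) * ((μ.colLen j : ℤ) - 1) : ℤ) : ℝ)
        / (μ.card * ((μ.card : ℝ) - 1)) := by
    rw [Finset.sum_congr rfl (fun i _ => (Finset.sum_div _ _ _).symm)]
    rw [← Finset.sum_div]
    push_cast
    ring
  rw [hsum]
  have hne : (μ.card : ℝ) * ((μ.card : ℝ) - 1) ≠ 0 := by
    have : (2 : ℝ) ≤ (μ.card : ℝ) := by exact_mod_cast h2
    intro hc
    rcases mul_eq_zero.mp hc with h | h <;> nlinarith
  have keyR : (SYTAux.dcount μ 1 : ℝ) * (μ.card * ((μ.card : ℝ) - 1))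
      = (SYTAux.NN μ : ℝ) * ((∑ i ∈ Finset.range μ.card, ∑ j ∈ Finset.range (i+1),
          (μ.colLen i : ℤ) * ((μ.colLen j : ℤ) - 1) : ℤ) : ℝ) := by
    exact_mod_cast key
  rw [mul_div_assoc', eq_div_iff hne]
  push_cast at keyR ⊢
  linear_combination keyR
end
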